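/- arXiv:1204.4571 — 5 statements merged into one kernel-verified Lean document; each statement's English description precedes it below -/
import Mathlib

section
/- For the k-dimensional backward heat kernel ρ_{(y,s)}(x,t) = (4π(s-t))^{-k/2} exp(-|x-y|²/(4(s-t))) with t < s, and for any k-dimensional subspace S of ℝⁿ (identified with its orthogonal projection), the identity (∇²ρ)·S + |(∇ρ)^⊥|²/ρ + ∂ρ/∂t = 0 holds, where (∇ρ)^⊥ = (I-S)(∇ρ), ∇ denotes the spatial gradient, ∇²ρ the spatial Hessian, and A·S = trace(Aᵀ S). -/
open Real

/-- The backward heat kernel identity: for the `k`-dimensional backward heat kernel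
`ρ_{(y,s)}(x,t) = (4π(s-t))^{-k/2} exp(-|x-y|²/(4(s-t)))` with `t < s` and any
orthogonal projection `S` onto a `k`-dimensional subspace of `ℝⁿ`,
`(∇²ρ)·S + |(∇ρ)^⊥|²/ρ + ∂ρ/∂t = 0`. -/
theorem backward_heat_kernel_identity (k n : ℕ) (hk : 0 < k) (hkn : k < n)
    (y : Fin n → ℝ) (s : ℝ)
    (ρ : (Fin n → ℝ) → ℝ → ℝ)
    (hρ : ∀ x t, ρ x t =
      (4 * π * (s - t)) ^ (-(k : ℝ) / 2) * Real.exp (-(∑ i, (x i - y i) ^ 2) / (4 * (s - t))))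
    (S : Matrix (Fin n) (Fin n) ℝ)
    (hSsymm : S.IsSymm) (hSproj : S * S = S) (hStrace : S.trace = (k : ℝ))
    (x : Fin n → ℝ) (t : ℝ) (hts : t < s) :
    (∑ i, ∑ j, deriv (fun a => deriv
        (fun b => ρ (Function.update (Function.update x i a) j b) t)
        ((Function.update x i a) j)) (x i) * S i j)
      + (∑ i, ((deriv (fun b => ρ (Function.update x i b) t) (x i))
          - ∑ j, S i j * (deriv (fun b => ρ (Function.update x j b) t) (x j))) ^ 2) / ρ x t
      + deriv (fun τ => ρ x τ) t = 0 := by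
  have hπ : (0:ℝ) < π := Real.pi_pos
  have hτ : (0:ℝ) < s - t := by linarith
  have hτ0 : s - t ≠ 0 := ne_of_gt hτ
  -- product form of ρ at time t
  have hprod : ∀ z : Fin n → ℝ, ρ z t =
      (4 * π * (s - t)) ^ (-(k : ℝ) / 2) * ∏ i, Real.exp (-(z i - y i) ^ 2 / (4 * (s - t))) := by
    intro z
    rw [hρ, ← Real.exp_sum]
    congr 1
    rw [← Finset.sum_neg_distrib, Finset.sum_div]
  -- update form
  have hupd : ∀ (z : Fin n → ℝ) (i : Fin n) (b : ℝ),
      ρ (Function.update z i b) t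
        = (ρ z t / Real.exp (-(z i - y i) ^ 2 / (4 * (s - t))))
            * Real.exp (-(b - y i) ^ 2 / (4 * (s - t))) := by
    intro z i b
    have hfun : (fun j => Real.exp (-(Function.update z i b j - y j) ^ 2 / (4 * (s - t))))
        = Function.update (fun j => Real.exp (-(z j - y j) ^ 2 / (4 * (s - t)))) i
            (Real.exp (-(b - y i) ^ 2 / (4 * (s - t)))) := by
      funext j
      by_cases h : j = i
      · subst h; simp
      · simp [Function.update_of_ne h]
    rw [hprod (Function.update z i b), hprod z]
    calc (4 * π * (s - t)) ^ (-(k : ℝ) / 2)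
          * ∏ j, Real.exp (-(Function.update z i b j - y j) ^ 2 / (4 * (s - t)))
        = (4 * π * (s - t)) ^ (-(k : ℝ) / 2)
          * (Real.exp (-(b - y i) ^ 2 / (4 * (s - t)))
              * ∏ j ∈ Finset.univ \ {i}, Real.exp (-(z j - y j) ^ 2 / (4 * (s - t)))) := by
          rw [hfun, Finset.prod_update_of_mem (Finset.mem_univ i)]
      _ = _ := by
          rw [show (Finset.univ \ {i} : Finset (Fin n)) = Finset.univ.erase i by
                ext; simp [Finset.mem_erase, and_comm],
             ← Finset.mul_prod_erase Finset.univ _ (Finset.mem_univ i)]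
          have he := Real.exp_ne_zero (-(z i - y i) ^ 2 / (4 * (s - t)))
          field_simp
  -- one-variable Gaussian derivative
  have hd1 : ∀ (c m b : ℝ), HasDerivAt (fun u => c * Real.exp (-(u - m) ^ 2 / (4 * (s - t))))
      (c * Real.exp (-(b - m) ^ 2 / (4 * (s - t))) * (-(b - m) / (2 * (s - t)))) b := by
    intro c m b
    have h2 : HasDerivAt (fun u : ℝ => (u - m) ^ 2) (2 * (b - m)) b := by
      simpa using ((hasDerivAt_id b).sub_const m).fun_pow 2
    have h3 : HasDerivAt (fun u : ℝ => -(u - m) ^ 2 / (4 * (s - t)))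
        (-(b - m) / (2 * (s - t))) b := by
      have := (h2.neg).div_const (4 * (s - t))
      refine this.congr_deriv ?_
      field_simp
      ring
    have := (h3.exp).const_mul c
    refine this.congr_deriv ?_
    ring
  -- second derivative helper (diagonal case)
  have hd2 : ∀ (c m a : ℝ), HasDerivAt
      (fun u => c * Real.exp (-(u - m) ^ 2 / (4 * (s - t))) * (-(u - m) / (2 * (s - t))))
      (c * Real.exp (-(a - m) ^ 2 / (4 * (s - t)))
        * ((a - m) ^ 2 / (4 * (s - t) ^ 2) - 1 / (2 * (s - t)))) a := by
    intro c m a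
    have hf := hd1 c m a
    have hg : HasDerivAt (fun u : ℝ => -(u - m) / (2 * (s - t))) (-1 / (2 * (s - t))) a := by
      have := (((hasDerivAt_id a).sub_const m).neg).div_const (2 * (s - t))
      simpa using this
    have := hf.mul hg
    refine this.congr_deriv ?_
    field_simp
    ring
  -- gradient formula
  have hgrad : ∀ (z : Fin n → ℝ) (i : Fin n),
      deriv (fun b => ρ (Function.update z i b) t) (z i)
        = ρ z t * (-(z i - y i) / (2 * (s - t))) := by
    intro z i
    have heq : (fun b => ρ (Function.update z i b) t)
        = fun b => (ρ z t / Real.exp (-(z i - y i) ^ 2 / (4 * (s - t))))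
            * Real.exp (-(b - y i) ^ 2 / (4 * (s - t))) := by
      funext b; exact hupd z i b
    rw [heq, (hd1 _ _ _).deriv, div_mul_cancel₀ _ (Real.exp_ne_zero _)]
  -- Hessian formula
  have hHess : ∀ i j : Fin n,
      deriv (fun a => deriv (fun b => ρ (Function.update (Function.update x i a) j b) t)
          ((Function.update x i a) j)) (x i)
        = ρ x t * ((x i - y i) * (x j - y j) / (4 * (s - t) ^ 2)
            - (if i = j then 1 else 0) / (2 * (s - t))) := by
    intro i j
    have hfun : (fun a => deriv (fun b => ρ (Function.update (Function.update x i a) j b) t)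
          ((Function.update x i a) j))
        = fun a => ρ (Function.update x i a) t
            * (-((Function.update x i a) j - y j) / (2 * (s - t))) := by
      funext a; exact hgrad (Function.update x i a) j
    rw [hfun]
    by_cases hij : i = j
    · subst hij
      have heq : (fun a => ρ (Function.update x i a) t
            * (-((Function.update x i a) i - y i) / (2 * (s - t))))
          = fun a => (ρ x t / Real.exp (-(x i - y i) ^ 2 / (4 * (s - t))))
              * Real.exp (-(a - y i) ^ 2 / (4 * (s - t))) * (-(a - y i) / (2 * (s - t))) := by
        funext a
        rw [hupd, Function.update_self]
      rw [heq, (hd2 _ _ _).deriv, div_mul_cancel₀ _ (Real.exp_ne_zero _)]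
      have hone : (if i = i then (1:ℝ) else 0) = 1 := if_pos rfl
      rw [hone]
      ring
    · have heq : (fun a => ρ (Function.update x i a) t
            * (-((Function.update x i a) j - y j) / (2 * (s - t))))
          = fun a => ((ρ x t / Real.exp (-(x i - y i) ^ 2 / (4 * (s - t))))
              * (-(x j - y j) / (2 * (s - t)))) * Real.exp (-(a - y i) ^ 2 / (4 * (s - t))) := by
        funext a
        rw [Function.update_of_ne (fun h => hij h.symm), hupd]
        ring
      rw [heq, (hd1 _ _ _).deriv]
      simp only [if_neg hij]
      have he := Real.exp_ne_zero (-(x i - y i) ^ 2 / (4 * (s - t)))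
      field_simp
      ring
  -- time derivative
  have htime : deriv (fun τ => ρ x τ) t
      = ρ x t * ((k : ℝ) / (2 * (s - t)) - (∑ i, (x i - y i) ^ 2) / (4 * (s - t) ^ 2)) := by
    set Q : ℝ := ∑ i, (x i - y i) ^ 2 with hQ
    have heq : (fun τ => ρ x τ)
        = fun τ => (4 * π * (s - τ)) ^ (-(k : ℝ) / 2) * Real.exp (-Q / (4 * (s - τ))) := by
      funext τ; rw [hρ]
    rw [heq]
    have hbase : HasDerivAt (fun τ : ℝ => 4 * π * (s - τ)) (-(4 * π)) t := by
      have h0 : HasDerivAt (fun τ : ℝ => s - τ) (-1) t := by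
        simpa using (hasDerivAt_id t).const_sub s
      have := h0.const_mul (4 * π)
      refine this.congr_deriv ?_
      ring
    have h1 : HasDerivAt (fun τ : ℝ => (4 * π * (s - τ)) ^ (-(k : ℝ) / 2))
        ((-(4 * π)) * (-(k : ℝ) / 2) * (4 * π * (s - t)) ^ (-(k : ℝ) / 2 - 1)) t :=
      hbase.rpow_const (Or.inl (by positivity))
    have h2 : HasDerivAt (fun τ : ℝ => -Q / (4 * (s - τ))) (-Q / (4 * (s - t) ^ 2)) t := by
      have hb : HasDerivAt (fun τ : ℝ => 4 * (s - τ)) (-4) t := by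
        have h0 : HasDerivAt (fun τ : ℝ => s - τ) (-1) t := by
          simpa using (hasDerivAt_id t).const_sub s
        have := h0.const_mul (4 : ℝ)
        refine this.congr_deriv ?_
        ring
      have hinv := hb.inv (by positivity : (4 : ℝ) * (s - t) ≠ 0)
      have h4 := hinv.const_mul (-Q)
      have heq2 : (fun τ : ℝ => -Q / (4 * (s - τ))) = fun τ : ℝ => -Q * (4 * (s - τ))⁻¹ := by
        funext τ; rw [div_eq_mul_inv]
      rw [heq2]
      refine h4.congr_deriv ?_
      field_simp
    have h3 := h1.fun_mul h2.exp
    rw [h3.deriv, hρ]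
    have hC4 : (4 * π * (s - t)) ^ (-(k : ℝ) / 2 - 1)
        = (4 * π * (s - t)) ^ (-(k : ℝ) / 2) / (4 * π * (s - t)) := by
      rw [Real.rpow_sub (by positivity), Real.rpow_one]
    rw [hC4]
    have hE := Real.exp_ne_zero (-Q / (4 * (s - t)))
    field_simp
    ring
  -- abbreviations
  have hR : (0:ℝ) < ρ x t := by rw [hρ]; positivity
  set R : ℝ := ρ x t with hRdef
  set v : Fin n → ℝ := fun i => x i - y i with hvdef
  set w : Fin n → ℝ := fun i => ∑ j, S i j * v j with hwdef
  set A : ℝ := ∑ i, v i ^ 2 with hAdef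
  set B : ℝ := ∑ i, v i * w i with hBdef
  have hsym : ∀ i j, S i j = S j i := fun i j => hSsymm.apply j i
  -- sum of w² equals B
  have hw : ∀ j, ∑ i, S i j * w i = w j := by
    intro j
    calc ∑ i, S i j * w i = ∑ i, ∑ l, S i j * (S i l * v l) := by
          refine Finset.sum_congr rfl (fun i _ => ?_)
          rw [hwdef]; exact Finset.mul_sum _ _ _
      _ = ∑ l, (∑ i, S i j * S i l) * v l := by
          rw [Finset.sum_comm]
          refine Finset.sum_congr rfl (fun l _ => ?_)
          rw [Finset.sum_mul]
          exact Finset.sum_congr rfl (fun i _ => by ring)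
      _ = ∑ l, S j l * v l := by
          refine Finset.sum_congr rfl (fun l _ => ?_)
          congr 1
          have : (∑ i, S i j * S i l) = (S * S) j l := by
            rw [Matrix.mul_apply]
            exact Finset.sum_congr rfl (fun i _ => by rw [hsym i j])
          rw [this, hSproj]
      _ = w j := by rw [hwdef]
  have hD : ∑ i, w i ^ 2 = B := by
    calc ∑ i, w i ^ 2 = ∑ i, ∑ j, S i j * v j * w i := by
          refine Finset.sum_congr rfl (fun i _ => ?_)
          rw [pow_two, hwdef]
          exact Finset.sum_mul _ _ _
      _ = ∑ j, v j * ∑ i, S i j * w i := by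
          rw [Finset.sum_comm]
          refine Finset.sum_congr rfl (fun j _ => ?_)
          rw [Finset.mul_sum]
          exact Finset.sum_congr rfl (fun i _ => by ring)
      _ = B := by
          rw [hBdef]
          exact Finset.sum_congr rfl (fun j _ => by rw [hw j])
  -- trace
  have htr : ∑ i, S i i = (k : ℝ) := by
    rw [← hStrace]; rfl
  -- Hessian sum
  have h1 : (∑ i, ∑ j, deriv (fun a => deriv
        (fun b => ρ (Function.update (Function.update x i a) j b) t)
        ((Function.update x i a) j)) (x i) * S i j)
      = R * B / (4 * (s - t) ^ 2) - R * k / (2 * (s - t)) := by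
    have hinner : ∀ i, (∑ j, deriv (fun a => deriv
          (fun b => ρ (Function.update (Function.update x i a) j b) t)
          ((Function.update x i a) j)) (x i) * S i j)
        = R / (4 * (s - t) ^ 2) * (v i * w i) - R / (2 * (s - t)) * S i i := by
      intro i
      calc (∑ j, deriv (fun a => deriv
            (fun b => ρ (Function.update (Function.update x i a) j b) t)
            ((Function.update x i a) j)) (x i) * S i j)
          = ∑ j, (R / (4 * (s - t) ^ 2) * (v i * (S i j * v j))
              - R / (2 * (s - t)) * (if i = j then S i j else 0)) := by
            refine Finset.sum_congr rfl (fun j _ => ?_)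
            rw [hHess i j]
            by_cases h : i = j
            · simp only [if_pos h, hvdef]; ring
            · simp only [if_neg h, hvdef]; ring
        _ = R / (4 * (s - t) ^ 2) * (v i * w i) - R / (2 * (s - t)) * S i i := by
            rw [Finset.sum_sub_distrib]
            congr 1
            · simp only [hwdef, Finset.mul_sum]
            · rw [← Finset.mul_sum]
              congr 1
              simp
    rw [Finset.sum_congr rfl (fun i _ => hinner i), Finset.sum_sub_distrib,
        ← Finset.mul_sum, ← Finset.mul_sum, htr, hBdef]
    ring
  -- gradient sum
  have h2 : (∑ i, ((deriv (fun b => ρ (Function.update x i b) t) (x i))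
        - ∑ j, S i j * (deriv (fun b => ρ (Function.update x j b) t) (x j))) ^ 2)
      = R ^ 2 / (4 * (s - t) ^ 2) * (A - B) := by
    have hterm : ∀ i, ((deriv (fun b => ρ (Function.update x i b) t) (x i))
          - ∑ j, S i j * (deriv (fun b => ρ (Function.update x j b) t) (x j))) ^ 2
        = R ^ 2 / (4 * (s - t) ^ 2) * (v i ^ 2 - 2 * (v i * w i) + w i ^ 2) := by
      intro i
      have hs : (∑ j, S i j * (deriv (fun b => ρ (Function.update x j b) t) (x j)))
          = (-R / (2 * (s - t))) * w i := by
        simp only [hwdef, Finset.mul_sum]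
        refine Finset.sum_congr rfl (fun j _ => ?_)
        rw [hgrad x j, ← hRdef]
        simp only [hvdef]
        ring
      rw [hs, hgrad x i, ← hRdef]
      have : R * (-(x i - y i) / (2 * (s - t))) - (-R / (2 * (s - t))) * w i
          = (-R / (2 * (s - t))) * (v i - w i) := by
        rw [hvdef]; field_simp; ring
      rw [this]
      field_simp
      ring
    rw [Finset.sum_congr rfl (fun i _ => hterm i), ← Finset.mul_sum]
    congr 1
    rw [Finset.sum_add_distrib, Finset.sum_sub_distrib, ← Finset.mul_sum, hD, hAdef, hBdef]
    ring
  have hR0 : R ≠ 0 := ne_of_gt hR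
  rw [h1, h2, htime]
  field_simp
  ring
end

section
/- Let f = (f_{k+1},...,f_n) : B₁ᵏ → ℝ^{n-k} be differentiable with |∇f| ≤ 1, and let g = (g_{k+1},...,g_n) be differentiable functions of (x₁,...,x_k). At a point x, let S ∈ G(n,k) be the tangent space of the graph of f at (x, f(x)), spanned by the vectors f_j = (e_j, ∂f/∂x_j), and for each l let g_l be the vector (∂g_l/∂x₁,...,∂g_l/∂x_k, 0,...,-1,...,0) with -1 in the l-th slot. Then Σ_{l=k+1}^n |S(g_l)|² ≥ (1/(2k)) |∇f - ∇g|², where S(v) denotes the orthogonal projection of v onto S. -/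
open scoped RealInnerProductSpace

/-- Projection lower bound: if `S` is the tangent plane of the graph of `f` at a point
(spanned by the vectors `(e_j, ∂f/∂x_j)`), `|∇f| ≤ 1`, and for each `l` the vector
`g_l = (∇g_l, 0,…,-1,…,0)` is given, then
`Σ_l |S(g_l)|² ≥ (1/(2k)) |∇f - ∇g|²`. -/
theorem tangent_projection_lower_bound (k m : ℕ) (hk : 0 < k) (hm : 0 < m)
    (f g : (Fin k → ℝ) → Fin m → ℝ)
    (Df Dg : (Fin k → ℝ) → Fin m → Fin k → ℝ)
    (x : Fin k → ℝ) (hx : ∑ j, (x j) ^ 2 < 1)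
    (hDf : ∀ (z : Fin k → ℝ), ∑ j, (z j) ^ 2 < 1 → ∀ (l : Fin m) (j : Fin k),
      HasDerivAt (fun s => f (Function.update z j s) l) (Df z l j) (z j))
    (hDg : ∀ (z : Fin k → ℝ) (l : Fin m) (j : Fin k),
      HasDerivAt (fun s => g (Function.update z j s) l) (Dg z l j) (z j))
    (hgrad : ∑ l, ∑ j, (Df x l j) ^ 2 ≤ 1)
    (fvec : Fin k → EuclideanSpace ℝ (Fin (k + m)))
    (hfvec : ∀ j i, fvec j i = Fin.addCases (fun j' => if j' = j then (1:ℝ) else 0)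
      (fun l' => Df x l' j) i)
    (gvec : Fin m → EuclideanSpace ℝ (Fin (k + m)))
    (hgvec : ∀ l i, gvec l i = Fin.addCases (fun j => Dg x l j)
      (fun l' => if l' = l then (-1:ℝ) else 0) i) :
    (1 / (2 * (k : ℝ))) * (∑ l, ∑ j, (Df x l j - Dg x l j) ^ 2) ≤
      ∑ l, ‖(Submodule.orthogonalProjection (Submodule.span ℝ (Set.range fvec)) (gvec l) :
        EuclideanSpace ℝ (Fin (k + m)))‖ ^ 2 := by
  set S := Submodule.span ℝ (Set.range fvec) with hS
  have hmem : ∀ j, fvec j ∈ S := fun j => Submodule.subset_span ⟨j, rfl⟩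
  -- inner products
  have hinner : ∀ l j, ⟪gvec l, fvec j⟫ = Dg x l j - Df x l j := by
    intro l j
    rw [PiLp.inner_apply]
    simp only [RCLike.inner_apply, starRingEnd_apply, star_trivial]
    rw [Fin.sum_univ_add]
    simp only [hgvec, hfvec, Fin.addCases_left, Fin.addCases_right]
    rw [Finset.sum_congr rfl (fun j' _ => by
      rw [ite_mul, one_mul, zero_mul]), Finset.sum_ite_eq' Finset.univ j (fun j' => Dg x l j')]
    simp [Finset.sum_ite_eq' Finset.univ l (fun l' => -Df x l' j), sub_eq_add_neg]
  have hnorm : ∀ j, ‖fvec j‖ ^ 2 = 1 + ∑ l', (Df x l' j) ^ 2 := by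
    intro j
    rw [← real_inner_self_eq_norm_sq, PiLp.inner_apply]
    simp only [RCLike.inner_apply, starRingEnd_apply, star_trivial]
    rw [Fin.sum_univ_add]
    simp only [hfvec, Fin.addCases_left, Fin.addCases_right]
    have h1 : ∑ j' : Fin k, (if j' = j then (1:ℝ) else 0) * (if j' = j then (1:ℝ) else 0) = 1 := by
      simp [ite_mul, Finset.sum_ite_eq']
    have h2 : ∑ l' : Fin m, Df x l' j * Df x l' j = ∑ l', (Df x l' j) ^ 2 :=
      Finset.sum_congr rfl fun l' _ => by ring
    rw [h1, h2]
  have hnorm2 : ∀ j, ‖fvec j‖ ^ 2 ≤ 2 := by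
    intro j
    rw [hnorm j]
    have h1 : ∑ l', (Df x l' j) ^ 2 ≤ ∑ l, ∑ j', (Df x l j') ^ 2 := by
      apply Finset.sum_le_sum
      intro l _
      exact Finset.single_le_sum (f := fun j' => (Df x l j') ^ 2)
        (fun _ _ => sq_nonneg _) (Finset.mem_univ j)
    linarith
  -- key inequality
  have key : ∀ l j, (Df x l j - Dg x l j) ^ 2 ≤
      2 * ‖(Submodule.orthogonalProjection S (gvec l) : EuclideanSpace ℝ (Fin (k + m)))‖ ^ 2 := by
    intro l j
    set P := (Submodule.orthogonalProjection S (gvec l) : EuclideanSpace ℝ (Fin (k + m))) with hP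
    have horth : ⟪gvec l - P, fvec j⟫ = 0 :=
      Submodule.starProjection_inner_eq_zero (gvec l) (fvec j) (hmem j)
    have hPin : ⟪P, fvec j⟫ = Dg x l j - Df x l j := by
      have := inner_sub_left (𝕜 := ℝ) (gvec l) P (fvec j)
      rw [horth, hinner l j] at this
      linarith
    have hcs : |⟪P, fvec j⟫| ≤ ‖P‖ * ‖fvec j‖ := abs_real_inner_le_norm P (fvec j)
    have hsq : ⟪P, fvec j⟫ ^ 2 ≤ ‖P‖ ^ 2 * ‖fvec j‖ ^ 2 := by
      rw [← mul_pow]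
      calc ⟪P, fvec j⟫ ^ 2 = |⟪P, fvec j⟫| ^ 2 := (sq_abs _).symm
        _ ≤ (‖P‖ * ‖fvec j‖) ^ 2 := by
            apply pow_le_pow_left₀ (abs_nonneg _) hcs
    have h2 : ‖P‖ ^ 2 * ‖fvec j‖ ^ 2 ≤ ‖P‖ ^ 2 * 2 :=
      mul_le_mul_of_nonneg_left (hnorm2 j) (sq_nonneg _)
    have : (Df x l j - Dg x l j) ^ 2 = ⟪P, fvec j⟫ ^ 2 := by
      rw [hPin]; ring
    linarith
  -- sum up
  have hsum : ∀ l, ∑ j, (Df x l j - Dg x l j) ^ 2 ≤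
      (2 * k) * ‖(Submodule.orthogonalProjection S (gvec l) : EuclideanSpace ℝ (Fin (k + m)))‖ ^ 2 := by
    intro l
    calc ∑ j, (Df x l j - Dg x l j) ^ 2
        ≤ ∑ _j : Fin k, 2 * ‖(Submodule.orthogonalProjection S (gvec l) :
            EuclideanSpace ℝ (Fin (k + m)))‖ ^ 2 :=
          Finset.sum_le_sum fun j _ => key l j
      _ = (2 * k) * ‖(Submodule.orthogonalProjection S (gvec l) :
            EuclideanSpace ℝ (Fin (k + m)))‖ ^ 2 := by
          rw [Finset.sum_const, Finset.card_univ, Fintype.card_fin, nsmul_eq_mul]; ring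
  have htot : ∑ l, ∑ j, (Df x l j - Dg x l j) ^ 2 ≤
      (2 * k) * ∑ l, ‖(Submodule.orthogonalProjection S (gvec l) :
        EuclideanSpace ℝ (Fin (k + m)))‖ ^ 2 := by
    rw [Finset.mul_sum]
    exact Finset.sum_le_sum fun l _ => hsum l
  have hkpos : (0:ℝ) < 2 * k := by positivity
  rw [div_mul_eq_mul_div, one_mul, div_le_iff₀ hkpos]
  linarith [htot]
end

section
/- There exists a constant c = c(n,k) such that for any differentiable f : B₁ᵏ → ℝ^{n-k}, the orthogonal projection S onto the tangent plane of graph f at a point satisfies |S - Σ_{j=1}^k f_j ⊗ f_j| ≤ c|∇f|², where f_j = (e_j, ∂f/∂x_j) and ⊗ denotes the tensor (outer) product of vectors. -/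
open Finset Matrix

private lemma sqrt_sum_sq_sum_le' {ι α : Type*} [Fintype ι] [Fintype α] (w : ι → α → ℝ) :
    Real.sqrt (∑ a, (∑ j, w j a) ^ 2) ≤ ∑ j, Real.sqrt (∑ a, (w j a) ^ 2) := by
  have hnorm : ∀ v : EuclideanSpace ℝ α, ‖v‖ = Real.sqrt (∑ a, (v a) ^ 2) := fun v => by
    rw [EuclideanSpace.norm_eq]
    congr 1
    exact Finset.sum_congr rfl fun a _ => by rw [Real.norm_eq_abs, sq_abs]
  set W : ι → EuclideanSpace ℝ α := fun j => WithLp.toLp 2 (w j) with hW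
  have h := norm_sum_le (Finset.univ : Finset ι) W
  rw [hnorm] at h
  have happ : ∀ a, (∑ j, W j) a = ∑ j, w j a := fun a => by rw [WithLp.ofLp_sum, Finset.sum_apply]
  calc Real.sqrt (∑ a, (∑ j, w j a) ^ 2)
      = Real.sqrt (∑ a, ((∑ j, W j) a) ^ 2) := by
        congr 1; exact Finset.sum_congr rfl fun a _ => by rw [happ]
    _ ≤ ∑ j, ‖W j‖ := h
    _ = ∑ j, Real.sqrt (∑ a, (w j a) ^ 2) := Finset.sum_congr rfl fun j _ => by rw [hnorm]

private lemma projection_tensor_aux (k m : ℕ) (D : Matrix (Fin m) (Fin k) ℝ)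
    (ht1 : ∑ l, ∑ j, (D l j) ^ 2 ≤ 1)
    (fvec : Fin k → EuclideanSpace ℝ (Fin (k + m)))
    (hfvec : ∀ j i, fvec j i = Fin.addCases (fun j' => if j' = j then (1:ℝ) else 0)
      (fun l' => D l' j) i) :
    Real.sqrt (∑ i, ∑ i',
      ((Submodule.orthogonalProjectionOnto (Submodule.span ℝ (Set.range fvec))
          (EuclideanSpace.single i' (1:ℝ)) : EuclideanSpace ℝ (Fin (k + m))) i
        - ∑ j, fvec j i * fvec j i') ^ 2)
      ≤ (2 * (k:ℝ)^2) * (∑ l, ∑ j, (D l j) ^ 2) := by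
  classical
  set t : ℝ := ∑ l, ∑ j, (D l j) ^ 2 with htdef
  set s : Fin k → ℝ := fun j => ∑ l, (D l j) ^ 2 with hsdef
  have hts : t = ∑ j, s j := Finset.sum_comm
  have hsnn : ∀ j, 0 ≤ s j := fun j => Finset.sum_nonneg fun l _ => sq_nonneg _
  have htnn : 0 ≤ t := by rw [hts]; exact Finset.sum_nonneg fun j _ => hsnn j
  have hst : ∀ j, s j ≤ t := by
    intro j
    rw [hts]
    exact Finset.single_le_sum (fun j _ => hsnn j) (Finset.mem_univ j)
  set A : Matrix (Fin k) (Fin k) ℝ := Dᴴ * D with hA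
  set G : Matrix (Fin k) (Fin k) ℝ := 1 + A with hG
  have hApsd := Matrix.posSemidef_conjTranspose_mul_self D
  have hGpd : G.PosDef := Matrix.PosDef.one.add_posSemidef hApsd
  set M : Matrix (Fin k) (Fin k) ℝ := G⁻¹ with hM
  have hdet : IsUnit G.det := hGpd.det_pos.ne'.isUnit
  have hGM : G * M = 1 := Matrix.mul_nonsing_inv _ hdet
  have hMG : M * G = 1 := Matrix.nonsing_inv_mul _ hdet
  have hMpd : M.PosDef := hGpd.inv
  have hMsymm : ∀ p q, M p q = M q p := by
    intro p q
    have h := hMpd.isHermitian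
    rw [Matrix.IsHermitian] at h
    conv_rhs => rw [← h]
    simp [Matrix.conjTranspose_apply]
  have hApos : ∀ y : Fin k → ℝ, 0 ≤ y ⬝ᵥ (A *ᵥ y) := by
    intro y; have := hApsd.dotProduct_mulVec_nonneg y; simpa [hA] using this
  have hq0 : ∀ x : Fin k → ℝ, 0 ≤ x ⬝ᵥ (M *ᵥ x) := by
    intro x; have := hMpd.posSemidef.dotProduct_mulVec_nonneg x; simpa using this
  have hself : ∀ v : Fin k → ℝ, 0 ≤ v ⬝ᵥ v := by
    intro v; exact Finset.sum_nonneg fun i _ => mul_self_nonneg _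
  have hq1 : ∀ x : Fin k → ℝ, x ⬝ᵥ (M *ᵥ x) ≤ x ⬝ᵥ x := by
    intro x
    set y : Fin k → ℝ := M *ᵥ x with hy
    have hxy : x = G *ᵥ y := by
      rw [hy, Matrix.mulVec_mulVec, hGM, Matrix.one_mulVec]
    have hGy : G *ᵥ y = y + A *ᵥ y := by
      rw [hG, Matrix.add_mulVec, Matrix.one_mulVec]
    have e1 : x ⬝ᵥ (M *ᵥ x) = x ⬝ᵥ y := rfl
    have e2 : x ⬝ᵥ x - x ⬝ᵥ y = y ⬝ᵥ (A *ᵥ y) + (A *ᵥ y) ⬝ᵥ (A *ᵥ y) := by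
      conv_lhs => rw [hxy, hGy]
      simp only [add_dotProduct, dotProduct_add]
      ring
    rw [e1]
    have := hApos y
    have := hself (A *ᵥ y)
    linarith
  have hent : ∀ p q : Fin k, (Pi.single p (1:ℝ)) ⬝ᵥ (M *ᵥ (Pi.single q 1)) = M p q := by
    intro p q
    rw [Matrix.mulVec_single, single_dotProduct]
    simp
  have hMbound : ∀ p q, |M p q| ≤ 1 := by
    intro p q
    have hdiag : ∀ r : Fin k, 0 ≤ M r r ∧ M r r ≤ 1 := by
      intro r
      constructor
      · have := hq0 (Pi.single r 1); rwa [hent r r] at this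
      · have := hq1 (Pi.single r 1)
        rw [hent r r] at this
        simpa [single_dotProduct, Pi.single_apply] using this
    by_cases hpq : p = q
    · subst hpq
      rw [abs_le]
      exact ⟨by linarith [(hdiag p).1], (hdiag p).2⟩
    · have hexp : ∀ a b : ℝ, (a • (Pi.single p 1 : Fin k → ℝ) + b • (Pi.single q 1 : Fin k → ℝ)) ⬝ᵥ
          (M *ᵥ (a • (Pi.single p 1 : Fin k → ℝ) + b • (Pi.single q 1 : Fin k → ℝ)))
          = a^2 * M p p + 2*a*b * M p q + b^2 * M q q := by
        intro a b
        rw [Matrix.mulVec_add, Matrix.mulVec_smul, Matrix.mulVec_smul,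
          dotProduct_add, add_dotProduct, add_dotProduct,
          dotProduct_smul, dotProduct_smul, dotProduct_smul,
          dotProduct_smul, smul_dotProduct, smul_dotProduct,
          smul_dotProduct, smul_dotProduct]
        simp only [smul_eq_mul, hent, hMsymm q p]
        ring
      have hxx : ∀ a b : ℝ, (a • (Pi.single p 1 : Fin k → ℝ) + b • (Pi.single q 1 : Fin k → ℝ)) ⬝ᵥ
          (a • (Pi.single p 1 : Fin k → ℝ) + b • (Pi.single q 1 : Fin k → ℝ)) = a^2 + b^2 := by
        intro a b
        rw [dotProduct_add, add_dotProduct, add_dotProduct]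
        simp [dotProduct_smul, smul_dotProduct, single_dotProduct,
          Pi.single_apply, hpq, Ne.symm hpq]
        ring
      have h1 := hq0 ((1:ℝ) • (Pi.single p 1 : Fin k → ℝ) + (1:ℝ) • (Pi.single q 1 : Fin k → ℝ))
      have h2 := hq1 ((1:ℝ) • (Pi.single p 1 : Fin k → ℝ) + (-1:ℝ) • (Pi.single q 1 : Fin k → ℝ))
      have h3 := hq0 ((1:ℝ) • (Pi.single p 1 : Fin k → ℝ) + (-1:ℝ) • (Pi.single q 1 : Fin k → ℝ))
      rw [hexp 1 1] at h1
      rw [hexp 1 (-1), hxx 1 (-1)] at h2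
      rw [hexp 1 (-1)] at h3
      have hd1 := hdiag p
      have hd2 := hdiag q
      rw [abs_le]
      constructor <;> nlinarith
  -- gram matrix
  have hgram : ∀ j l, (∑ i, fvec j i * fvec l i) = G j l := by
    intro j l
    simp only [hfvec]
    rw [Fin.sum_univ_add]
    simp only [Fin.addCases_left, Fin.addCases_right]
    rw [hG, hA]
    rw [Matrix.add_apply, Matrix.one_apply, Matrix.mul_apply]
    simp only [Matrix.conjTranspose_apply, star_trivial]
    congr 1
    simp only [ite_mul, one_mul, zero_mul]
    rw [Finset.sum_ite_eq' Finset.univ j (fun i => if i = l then (1:ℝ) else 0)]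
    simp [eq_comm]
  have hinner : ∀ x y : EuclideanSpace ℝ (Fin (k + m)),
      (inner ℝ x y : ℝ) = ∑ i, x i * y i := fun x y => by
    simp [PiLp.inner_apply, RCLike.inner_apply, conj_trivial, mul_comm]
  -- projection formula
  have hproj : ∀ i' : Fin (k + m),
      (Submodule.orthogonalProjectionOnto (Submodule.span ℝ (Set.range fvec))
          (EuclideanSpace.single i' (1:ℝ)) : EuclideanSpace ℝ (Fin (k + m)))
        = ∑ j, (∑ l, M j l * fvec l i') • fvec j := by
    intro i'
    rw [Submodule.coe_orthogonalProjectionOnto_apply]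
    apply Submodule.eq_starProjection_of_mem_of_inner_eq_zero
    · exact Submodule.sum_mem _ fun j _ =>
        Submodule.smul_mem _ _ (Submodule.subset_span ⟨j, rfl⟩)
    · intro w hw
      induction hw using Submodule.span_induction with
      | zero => simp
      | add a b _ _ ha hb => rw [inner_add_right, ha, hb, add_zero]
      | smul r a _ ha => rw [real_inner_smul_right, ha, mul_zero]
      | mem w hw =>
        obtain ⟨l, rfl⟩ := hw
        rw [inner_sub_left, sub_eq_zero]
        rw [EuclideanSpace.inner_single_left]
        simp only [starRingEnd_apply, star_one, one_mul]
        rw [sum_inner]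
        have hterm : ∀ j, (inner ℝ ((∑ p, M j p * fvec p i') • fvec j) (fvec l) : ℝ)
            = (∑ p, M j p * fvec p i') * G j l := by
          intro j
          rw [real_inner_smul_left, hinner, hgram]
        rw [Finset.sum_congr rfl fun j _ => hterm j]
        have hswap : ∑ j, (∑ p, M j p * fvec p i') * G j l
            = ∑ p, (∑ j, M j p * G j l) * fvec p i' := by
          simp only [Finset.sum_mul]
          rw [Finset.sum_comm]
          exact Finset.sum_congr rfl fun p _ => Finset.sum_congr rfl fun j _ => by ring
        rw [hswap]
        have hcol : ∀ p, (∑ j, M j p * G j l) = if p = l then 1 else 0 := by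
          intro p
          have h1 : (M * G) p l = ∑ j, M p j * G j l := Matrix.mul_apply
          rw [hMG, Matrix.one_apply] at h1
          rw [Finset.sum_congr rfl fun j _ => by rw [hMsymm j p]]
          exact h1.symm
        simp only [hcol, ite_mul, one_mul, zero_mul]
        simp
  -- entrywise identity
  set B : Fin k → Fin k → ℝ := fun j l => M j l - if j = l then 1 else 0 with hBdef
  have hentry : ∀ i' i : Fin (k + m),
      (Submodule.orthogonalProjectionOnto (Submodule.span ℝ (Set.range fvec))
          (EuclideanSpace.single i' (1:ℝ)) : EuclideanSpace ℝ (Fin (k + m))) i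
        - ∑ j, fvec j i * fvec j i'
      = ∑ j, ∑ l, B j l * (fvec j i * fvec l i') := by
    intro i' i
    rw [hproj i']
    have happ : (∑ j, (∑ l, M j l * fvec l i') • fvec j) i
        = ∑ j, (∑ l, M j l * fvec l i') * fvec j i := by
      rw [WithLp.ofLp_sum, Finset.sum_apply]
      exact Finset.sum_congr rfl fun j _ => rfl
    rw [happ]
    have h1 : ∀ j, (∑ l, M j l * fvec l i') * fvec j i
        = ∑ l, M j l * (fvec j i * fvec l i') := by
      intro j
      rw [Finset.sum_mul]
      exact Finset.sum_congr rfl fun l _ => by ring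
    have h2 : ∀ j, fvec j i * fvec j i'
        = ∑ l, (if j = l then (1:ℝ) else 0) * (fvec j i * fvec l i') := by
      intro j
      simp only [ite_mul, zero_mul, one_mul]
      rw [Finset.sum_ite_eq Finset.univ j (fun l => fvec j i * fvec l i')]
      simp
    rw [Finset.sum_congr rfl fun j _ => h1 j, Finset.sum_congr rfl fun j _ => h2 j,
      ← Finset.sum_sub_distrib]
    refine Finset.sum_congr rfl fun j _ => ?_
    rw [← Finset.sum_sub_distrib]
    refine Finset.sum_congr rfl fun l _ => ?_
    rw [hBdef]
    ring
  -- squared norms of fvec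
  have hP : ∀ j, (∑ i, (fvec j i) ^ 2) = 1 + s j := by
    intro j
    simp only [hfvec]
    rw [Fin.sum_univ_add]
    simp only [Fin.addCases_left, Fin.addCases_right]
    congr 1
    simp only [sq]
    simp [ite_mul, one_mul, zero_mul, Finset.sum_ite_eq' Finset.univ j]
  have hP2 : ∀ j, (∑ i, (fvec j i) ^ 2) ≤ 2 := by
    intro j
    rw [hP]
    have := hst j
    linarith
  have hPnn : ∀ j, 0 ≤ ∑ i, (fvec j i) ^ 2 := fun j =>
    Finset.sum_nonneg fun i _ => sq_nonneg _
  -- bound on B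
  have hB1 : M + M * A = 1 := by
    rw [← hMG, hG, Matrix.mul_add, Matrix.mul_one]
  have hAb : ∀ p l, |A p l| ≤ (s p + s l) / 2 := by
    intro p l
    have hApl : A p l = ∑ i, D i p * D i l := by
      rw [hA, Matrix.mul_apply]
      simp [Matrix.conjTranspose_apply]
    rw [hApl]
    calc |∑ i, D i p * D i l| ≤ ∑ i, |D i p * D i l| := Finset.abs_sum_le_sum_abs _ _
      _ ≤ ∑ i, ((D i p)^2 + (D i l)^2) / 2 := by
          refine Finset.sum_le_sum fun i _ => ?_
          rw [abs_mul]
          nlinarith [sq_nonneg (|D i p| - |D i l|), sq_abs (D i p), sq_abs (D i l),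
            abs_nonneg (D i p), abs_nonneg (D i l)]
      _ = (s p + s l) / 2 := by
          rw [hsdef]
          rw [← Finset.sum_div, Finset.sum_add_distrib]
  have hBb : ∀ j l, |B j l| ≤ ∑ p, (s p + s l) / 2 := by
    intro j l
    have hBeq : B j l = -(∑ p, M j p * A p l) := by
      have := congrFun (congrFun hB1 j) l
      rw [Matrix.add_apply, Matrix.mul_apply] at this
      have h1 : (1 : Matrix (Fin k) (Fin k) ℝ) j l = if j = l then 1 else 0 :=
        Matrix.one_apply
      rw [hBdef]
      simp only
      rw [← h1, ← this]
      ring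
    rw [hBeq, abs_neg]
    calc |∑ p, M j p * A p l| ≤ ∑ p, |M j p * A p l| := Finset.abs_sum_le_sum_abs _ _
      _ ≤ ∑ p, (s p + s l) / 2 := by
          refine Finset.sum_le_sum fun p _ => ?_
          rw [abs_mul]
          calc |M j p| * |A p l| ≤ 1 * ((s p + s l) / 2) := by
                apply mul_le_mul (hMbound j p) (hAb p l) (abs_nonneg _)
                norm_num
            _ = (s p + s l) / 2 := by ring
  have hBsum : ∑ j, ∑ l, |B j l| ≤ (k:ℝ)^2 * t := by
    calc ∑ j, ∑ l, |B j l| ≤ ∑ j : Fin k, ∑ l : Fin k, ∑ p : Fin k, (s p + s l) / 2 := by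
          exact Finset.sum_le_sum fun j _ => Finset.sum_le_sum fun l _ => hBb j l
      _ = (k:ℝ)^2 * t := by
          have hin : ∀ l : Fin k, ∑ p : Fin k, (s p + s l) / 2 = (t + (k:ℝ) * s l) / 2 := by
            intro l
            rw [← Finset.sum_div, Finset.sum_add_distrib, Finset.sum_const,
              Finset.card_univ, Fintype.card_fin, nsmul_eq_mul, ← hts]
          have hin2 : ∑ l : Fin k, ∑ p : Fin k, (s p + s l) / 2 = (k:ℝ) * t := by
            rw [Finset.sum_congr rfl fun l _ => hin l, ← Finset.sum_div,
              Finset.sum_add_distrib, Finset.sum_const, Finset.card_univ, Fintype.card_fin,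
              nsmul_eq_mul, ← Finset.mul_sum, ← hts]
            ring
          rw [Finset.sum_congr rfl fun j _ => hin2, Finset.sum_const, Finset.card_univ,
            Fintype.card_fin, nsmul_eq_mul]
          ring
  -- final estimate
  have hgoal : Real.sqrt (∑ i, ∑ i',
      ((Submodule.orthogonalProjectionOnto (Submodule.span ℝ (Set.range fvec))
          (EuclideanSpace.single i' (1:ℝ)) : EuclideanSpace ℝ (Fin (k + m))) i
        - ∑ j, fvec j i * fvec j i') ^ 2)
      = Real.sqrt (∑ a : Fin (k+m) × Fin (k+m),
          (∑ q : Fin k × Fin k, B q.1 q.2 * (fvec q.1 a.1 * fvec q.2 a.2)) ^ 2) := by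
    congr 1
    rw [Fintype.sum_prod_type]
    refine Finset.sum_congr rfl fun i _ => Finset.sum_congr rfl fun i' _ => ?_
    rw [hentry i' i, Fintype.sum_prod_type]
  rw [hgoal]
  calc Real.sqrt (∑ a : Fin (k+m) × Fin (k+m),
          (∑ q : Fin k × Fin k, B q.1 q.2 * (fvec q.1 a.1 * fvec q.2 a.2)) ^ 2)
      ≤ ∑ q : Fin k × Fin k, Real.sqrt (∑ a : Fin (k+m) × Fin (k+m),
          (B q.1 q.2 * (fvec q.1 a.1 * fvec q.2 a.2)) ^ 2) :=
        sqrt_sum_sq_sum_le' _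
    _ ≤ ∑ q : Fin k × Fin k, 2 * |B q.1 q.2| := by
        refine Finset.sum_le_sum fun q _ => ?_
        have hsq : ∑ a : Fin (k+m) × Fin (k+m),
            (B q.1 q.2 * (fvec q.1 a.1 * fvec q.2 a.2)) ^ 2
            = (B q.1 q.2)^2 * ((∑ i, (fvec q.1 i)^2) * (∑ i', (fvec q.2 i')^2)) := by
          rw [Fintype.sum_prod_type]
          rw [Finset.sum_mul_sum]
          rw [Finset.mul_sum]
          refine Finset.sum_congr rfl fun i _ => ?_
          rw [Finset.mul_sum]
          exact Finset.sum_congr rfl fun i' _ => by ring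
        rw [hsq, Real.sqrt_mul (sq_nonneg _), Real.sqrt_sq_eq_abs]
        have h4 : (∑ i, (fvec q.1 i)^2) * (∑ i', (fvec q.2 i')^2) ≤ 4 := by
          have := hP2 q.1
          have := hP2 q.2
          have := hPnn q.1
          have := hPnn q.2
          nlinarith
        have hsqrt4 : Real.sqrt ((∑ i, (fvec q.1 i)^2) * (∑ i', (fvec q.2 i')^2)) ≤ 2 := by
          rw [show (2:ℝ) = Real.sqrt 4 by
            rw [show (4:ℝ) = 2^2 by norm_num, Real.sqrt_sq]; norm_num]
          exact Real.sqrt_le_sqrt h4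
        calc |B q.1 q.2| * Real.sqrt ((∑ i, (fvec q.1 i)^2) * (∑ i', (fvec q.2 i')^2))
            ≤ |B q.1 q.2| * 2 := by
              exact mul_le_mul_of_nonneg_left hsqrt4 (abs_nonneg _)
          _ = 2 * |B q.1 q.2| := by ring
    _ = 2 * ∑ j, ∑ l, |B j l| := by
        rw [Fintype.sum_prod_type, Finset.mul_sum]
        exact Finset.sum_congr rfl fun j _ => by rw [Finset.mul_sum]
    _ ≤ 2 * ((k:ℝ)^2 * t) := by linarith
    _ = (2 * (k:ℝ)^2) * t := by ring

/-- There is `c = c(n,k)` such that for a differentiable `f : B₁ᵏ → ℝ^{n-k}` with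
`|∇f| ≤ 1`, the orthogonal projection `S` onto the tangent plane of the graph satisfies
`|S - Σⱼ fⱼ ⊗ fⱼ| ≤ c |∇f|²` (Frobenius norm), where `fⱼ = (eⱼ, ∂f/∂xⱼ)`. -/
theorem projection_tensor_approximation (k m : ℕ) (hk : 0 < k) (hm : 0 < m) :
    ∃ c : ℝ, ∀ (f : (Fin k → ℝ) → Fin m → ℝ)
      (Df : (Fin k → ℝ) → Fin m → Fin k → ℝ)
      (x : Fin k → ℝ), ∑ j, (x j) ^ 2 < 1 →
      (∀ (z : Fin k → ℝ), ∑ j, (z j) ^ 2 < 1 → ∀ (l : Fin m) (j : Fin k),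
        HasDerivAt (fun s => f (Function.update z j s) l) (Df z l j) (z j)) →
      (∑ l, ∑ j, (Df x l j) ^ 2 ≤ 1) →
      ∀ (fvec : Fin k → EuclideanSpace ℝ (Fin (k + m))),
      (∀ j i, fvec j i = Fin.addCases (fun j' => if j' = j then (1:ℝ) else 0)
        (fun l' => Df x l' j) i) →
      Real.sqrt (∑ i, ∑ i',
        ((Submodule.orthogonalProjectionOnto (Submodule.span ℝ (Set.range fvec))
            (EuclideanSpace.single i' (1:ℝ)) : EuclideanSpace ℝ (Fin (k + m))) i
          - ∑ j, fvec j i * fvec j i') ^ 2)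
        ≤ c * (∑ l, ∑ j, (Df x l j) ^ 2) := by
  refine ⟨2 * (k:ℝ)^2, ?_⟩
  intro f Df x hx hderiv ht fvec hfvec
  exact projection_tensor_aux k m (Matrix.of (Df x)) ht fvec hfvec
end

section
/- There exists c₁ = c₁(n,k) with the following property. Let f : B₁ᵏ × (−1,1) → ℝ^{n−k} have continuous spatial gradient with |∇f| ≤ 1, let g ∈ ℱ, and for (x,t) let S be the tangent plane to graph f(·,t) at (x,f(x,t)). Then, evaluating at (x,f(x,t)): ∂Q_g/∂t − S·∇²Q_g ≤ c₁ Q_g^{1/2} |∇f|² |∇²g| − (1/(4k))|∇f − ∇g|² − (1/2)Σ_{l=k+1}^n |S(g_l)|², where g_l = (∂g_l/∂x₁,...,∂g_l/∂x_k,0,...,−1,...,0) with −1 in the l-th slot. -/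
open Function

private lemma castAdd_ne_natAdd {k m : ℕ} (j : Fin k) (l : Fin m) :
    Fin.castAdd m j ≠ Fin.natAdd k l := by
  simp only [Fin.ne_iff_vne, Fin.coe_castAdd, Fin.coe_natAdd]; omega

section
variable {k m : ℕ} (a b : Fin m → ℝ) (A : Fin m → Fin k → ℝ)
  (M : Fin m → Matrix (Fin k) (Fin k) ℝ)
  (g : Fin m → (Fin k → ℝ) → ℝ → ℝ) (t : ℝ)

private def Uf (Y : Fin (k+m) → ℝ) (l : Fin m) : ℝ :=
  Y (Fin.natAdd k l) - g l (fun j => Y (Fin.castAdd m j)) t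

private def Wf (Y : Fin (k+m) → ℝ) (l : Fin m) (i : Fin (k+m)) : ℝ :=
  Fin.addCases (fun j => -(A l j + ∑ j', M l j j' * Y (Fin.castAdd m j')))
    (fun l' => if l' = l then 1 else 0) i

private def MMf (i i' : Fin (k+m)) (l : Fin m) : ℝ :=
  Fin.addCases (fun j => Fin.addCases (fun j' => M l j j') (fun _ => (0:ℝ)) i')
    (fun _ => 0) i

private lemma update_castAdd (Y : Fin (k+m) → ℝ) (j : Fin k) (s : ℝ) :
    (fun j' => Function.update Y (Fin.castAdd m j) s (Fin.castAdd m j'))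
      = Function.update (fun j' => Y (Fin.castAdd m j')) j s := by
  funext j'
  by_cases h : j' = j
  · subst h; simp
  · rw [Function.update_of_ne (fun hc => h ((Fin.castAdd_injective k m).eq_iff.mp hc) :
        Fin.castAdd m j' ≠ Fin.castAdd m j), Function.update_of_ne h]

variable (hM : ∀ l, (M l).IsSymm)
  (hg : ∀ l y t, g l y t =
    a l + b l * t + ∑ i, A l i * y i + (1 / 2) * ∑ i, ∑ j, M l i j * y i * y j)

private lemma sum_update_lin (c y : Fin k → ℝ) (j : Fin k) (s : ℝ) :
    ∑ j', c j' * Function.update y j s j'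
      = (∑ j', c j' * y j') + (s - y j) * c j := by
  have h : ∀ j', c j' * Function.update y j s j'
      = c j' * y j' + (if j' = j then (s - y j) * c j' else 0) := by
    intro j'
    by_cases h : j' = j
    · subst h; simp [Function.update_self]; ring
    · simp [Function.update_of_ne h, h]
  rw [Finset.sum_congr rfl fun j' _ => h j', Finset.sum_add_distrib,
    Finset.sum_ite_eq' Finset.univ j fun j' => (s - y j) * c j']
  simp

private lemma sum_update_quad (N : Fin k → Fin k → ℝ)
    (hN : ∀ i j, N i j = N j i) (y : Fin k → ℝ) (j : Fin k) (s : ℝ) :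
    ∑ i', ∑ j', N i' j' * Function.update y j s i' * Function.update y j s j'
      = (∑ i', ∑ j', N i' j' * y i' * y j')
        + 2 * (s - y j) * (∑ j', N j j' * y j') + (s - y j)^2 * N j j := by
  set u := Function.update y j s with hu
  have inner : ∀ i', ∑ j', N i' j' * u i' * u j'
      = (∑ j', N i' j' * y j') * u i' + (s - y j) * (N i' j * u i') := by
    intro i'
    have := sum_update_lin (fun j' => N i' j') y j s
    calc ∑ j', N i' j' * u i' * u j' = (∑ j', N i' j' * u j') * u i' := by
          rw [Finset.sum_mul]; congr 1; funext j'; ring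
      _ = _ := by rw [this]; ring
  rw [Finset.sum_congr rfl fun i' _ => inner i', Finset.sum_add_distrib]
  have h1 : ∑ i', (∑ j', N i' j' * y j') * u i'
      = (∑ i', (∑ j', N i' j' * y j') * y i') + (s - y j) * ∑ j', N j j' * y j' :=
    sum_update_lin (fun i' => ∑ j', N i' j' * y j') y j s
  have h2 : ∑ i', (s - y j) * (N i' j * u i')
      = (s - y j) * ((∑ i', N i' j * y i') + (s - y j) * N j j) := by
    rw [← Finset.mul_sum]
    congr 1
    have := sum_update_lin (fun i' => N i' j) y j s
    rw [← this]
  rw [h1, h2]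
  have e1 : ∑ i', (∑ j', N i' j' * y j') * y i' = ∑ i', ∑ j', N i' j' * y i' * y j' := by
    congr 1; funext i'; rw [Finset.sum_mul]; congr 1; funext j'; ring
  have e2 : (∑ i', N i' j * y i') = ∑ j', N j j' * y j' := by
    congr 1; funext i'; rw [hN i' j]
  rw [e1, e2]; ring

include hM hg in
private lemma U_update (Y : Fin (k+m) → ℝ) (i : Fin (k+m)) (s : ℝ) (l : Fin m) :
    Uf g t (Function.update Y i s) l
      = Uf g t Y l + (s - Y i) * Wf A M Y l i
        - (1/2) * (s - Y i)^2 * MMf M i i l := by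
  induction i using Fin.addCases with
  | left j =>
    simp only [Uf, Wf, MMf, Fin.addCases_left]
    rw [Function.update_of_ne (castAdd_ne_natAdd j l).symm]
    rw [update_castAdd]
    set y := fun j' => Y (Fin.castAdd m j') with hy
    rw [hg l (Function.update y j s) t, hg l y t]
    rw [sum_update_lin (fun i => A l i) y j s,
      sum_update_quad (fun i j' => M l i j') (fun i j' => show M l i j' = M l j' i from (hM l).apply j' i) y j s]
    ring
  | right l' =>
    simp only [Uf, Wf, MMf, Fin.addCases_right]
    have hyc : (fun j' => Function.update Y (Fin.natAdd k l') s (Fin.castAdd m j'))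
        = fun j' => Y (Fin.castAdd m j') := by
      funext j'; rw [Function.update_of_ne (castAdd_ne_natAdd j' l')]
    rw [hyc]
    by_cases h : l' = l
    · subst h; simp
    · rw [Function.update_of_ne (fun hc => h (by simpa [Fin.ext_iff, eq_comm] using hc))]
      simp [h]

include hM in
private lemma W_update (Y : Fin (k+m) → ℝ) (i : Fin (k+m)) (s : ℝ) (l : Fin m)
    (i' : Fin (k+m)) :
    Wf A M (Function.update Y i s) l i'
      = Wf A M Y l i' - (s - Y i) * MMf M i i' l := by
  induction i using Fin.addCases with
  | left j =>
    induction i' using Fin.addCases with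
    | left j' =>
      simp only [Wf, MMf, Fin.addCases_left]
      have hrw : ∀ j'' : Fin k, Function.update Y (Fin.castAdd m j) s (Fin.castAdd m j'')
          = Function.update (fun j2 => Y (Fin.castAdd m j2)) j s j'' :=
        fun j'' => congrFun (update_castAdd Y j s) j''
      simp only [hrw]
      rw [sum_update_lin (fun j'' => M l j' j'') (fun j2 => Y (Fin.castAdd m j2)) j s,
        (hM l).apply j j']
      ring
    | right l' =>
      simp only [Wf, MMf, Fin.addCases_left, Fin.addCases_right]
      ring
  | right l'' =>
    have hyc : (fun j' => Function.update Y (Fin.natAdd k l'') s (Fin.castAdd m j'))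
        = fun j' => Y (Fin.castAdd m j') := by
      funext j'; rw [Function.update_of_ne (castAdd_ne_natAdd j' l'')]
    induction i' using Fin.addCases with
    | left j' =>
      simp only [Wf, MMf, Fin.addCases_left, Fin.addCases_right]
      simp only [fun j'' => congrFun hyc j'']
      ring
    | right l' =>
      simp only [Wf, MMf, Fin.addCases_right]
      ring

include hM hg in
private lemma Q_update_hasDeriv (Q : (Fin (k+m) → ℝ) → ℝ → ℝ)
    (hQ : ∀ x t, Q x t = (1/2) * ∑ l,
      (x (Fin.natAdd k l) - g l (fun j => x (Fin.castAdd m j)) t)^2)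
    (Y : Fin (k+m) → ℝ) (i : Fin (k+m)) :
    HasDerivAt (fun s => Q (Function.update Y i s) t)
      (∑ l, Uf g t Y l * Wf A M Y l i) (Y i) := by
  have hfun : (fun s => Q (Function.update Y i s) t)
      = fun s => (1/2) * ∑ l, (Uf g t Y l + (s - Y i) * Wf A M Y l i
          - (1/2) * (s - Y i)^2 * MMf M i i l)^2 := by
    funext s
    rw [hQ]
    congr 1
    refine Finset.sum_congr rfl fun l _ => ?_
    rw [← U_update a b A M g t hM hg Y i s l]
    rfl
  rw [hfun]
  have hsum : HasDerivAt (fun s => ∑ l, (Uf g t Y l + (s - Y i) * Wf A M Y l i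
      - (1/2) * (s - Y i)^2 * MMf M i i l)^2)
      (∑ l, 2 * (Uf g t Y l * Wf A M Y l i)) (Y i) := by
    refine HasDerivAt.fun_sum fun l _ => ?_
    have hb' : HasDerivAt (fun s : ℝ => s - Y i) 1 (Y i) := (hasDerivAt_id _).sub_const _
    have h2 : HasDerivAt (fun s : ℝ => (s - Y i) * Wf A M Y l i) (Wf A M Y l i) (Y i) := by
      simpa using hb'.mul_const (Wf A M Y l i)
    have h3 : HasDerivAt (fun s : ℝ => (1/2) * (s - Y i)^2 * MMf M i i l) 0 (Y i) := by
      have h4 := (((hasDerivAt_id (Y i)).sub_const (Y i)).pow 2)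
      have h5 := (h4.const_mul (1/2 : ℝ)).mul_const (MMf M i i l)
      simpa using h5
    have h1 : HasDerivAt (fun s : ℝ => Uf g t Y l + (s - Y i) * Wf A M Y l i
        - (1/2) * (s - Y i)^2 * MMf M i i l) (Wf A M Y l i) (Y i) := by
      simpa using ((hasDerivAt_const (Y i) (Uf g t Y l)).fun_add h2).fun_sub h3
    refine (h1.pow 2).congr_deriv ?_
    norm_num
    ring
  have := hsum.const_mul (1/2 : ℝ)
  refine this.congr_deriv ?_
  rw [Finset.mul_sum]
  refine Finset.sum_congr rfl fun l _ => ?_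
  ring

include hM hg in
private lemma hess_eq (Q : (Fin (k+m) → ℝ) → ℝ → ℝ)
    (hQ : ∀ x t, Q x t = (1/2) * ∑ l,
      (x (Fin.natAdd k l) - g l (fun j => x (Fin.castAdd m j)) t)^2)
    (X : Fin (k+m) → ℝ) (i i' : Fin (k+m)) :
    deriv (fun s => deriv (fun s' => Q (Function.update (Function.update X i s) i' s') t)
        ((Function.update X i s) i')) (X i)
      = ∑ l, (Wf A M X l i * Wf A M X l i' - Uf g t X l * MMf M i i' l) := by
  have hout : (fun s => deriv (fun s' => Q (Function.update (Function.update X i s) i' s') t)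
      ((Function.update X i s) i'))
      = fun s => ∑ l, Uf g t (Function.update X i s) l
          * Wf A M (Function.update X i s) l i' := by
    funext s
    exact (Q_update_hasDeriv a b A M g t hM hg Q hQ (Function.update X i s) i').deriv
  rw [hout]
  have hfun : (fun s => ∑ l, Uf g t (Function.update X i s) l
      * Wf A M (Function.update X i s) l i')
      = fun s => ∑ l, ((Uf g t X l + (s - X i) * Wf A M X l i
          - (1/2) * (s - X i)^2 * MMf M i i l)
        * (Wf A M X l i' - (s - X i) * MMf M i i' l)) := by
    funext s
    refine Finset.sum_congr rfl fun l _ => ?_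
    rw [U_update a b A M g t hM hg X i s l, W_update A M hM X i s l i']
  rw [hfun]
  refine HasDerivAt.deriv (HasDerivAt.fun_sum fun l _ => ?_)
  have hb' : HasDerivAt (fun s : ℝ => s - X i) 1 (X i) := (hasDerivAt_id _).sub_const _
  have h2 : HasDerivAt (fun s : ℝ => (s - X i) * Wf A M X l i) (Wf A M X l i) (X i) := by
    simpa using hb'.mul_const (Wf A M X l i)
  have h3 : HasDerivAt (fun s : ℝ => (1/2) * (s - X i)^2 * MMf M i i l) 0 (X i) := by
    have h4 := (((hasDerivAt_id (X i)).sub_const (X i)).pow 2)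
    have h5 := (h4.const_mul (1/2 : ℝ)).mul_const (MMf M i i l)
    simpa using h5
  have hφ : HasDerivAt (fun s : ℝ => Uf g t X l + (s - X i) * Wf A M X l i
      - (1/2) * (s - X i)^2 * MMf M i i l) (Wf A M X l i) (X i) := by
    simpa using ((hasDerivAt_const (X i) (Uf g t X l)).fun_add h2).fun_sub h3
  have hψ : HasDerivAt (fun s : ℝ => Wf A M X l i' - (s - X i) * MMf M i i' l)
      (-(MMf M i i' l)) (X i) := by
    simpa using (hasDerivAt_const (X i) (Wf A M X l i')).fun_sub (hb'.mul_const (MMf M i i' l))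
  refine (hφ.mul hψ).congr_deriv ?_
  norm_num
  ring

include hg in
private lemma Q_t_hasDeriv (Q : (Fin (k+m) → ℝ) → ℝ → ℝ)
    (hQ : ∀ x t, Q x t = (1/2) * ∑ l,
      (x (Fin.natAdd k l) - g l (fun j => x (Fin.castAdd m j)) t)^2)
    (X : Fin (k+m) → ℝ) :
    HasDerivAt (fun τ => Q X τ) (-∑ l, Uf g t X l * b l) t := by
  have hfun : (fun τ => Q X τ) = fun τ => (1/2) * ∑ l, (Uf g t X l - b l * (τ - t))^2 := by
    funext τ
    rw [hQ]
    congr 1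
    refine Finset.sum_congr rfl fun l _ => ?_
    congr 1
    simp only [Uf]
    rw [hg l _ τ, hg l _ t]
    ring
  rw [hfun]
  have hsum : HasDerivAt (fun τ => ∑ l, (Uf g t X l - b l * (τ - t))^2)
      (∑ l, 2 * (Uf g t X l * (-b l))) t := by
    refine HasDerivAt.fun_sum fun l _ => ?_
    have hb' : HasDerivAt (fun τ : ℝ => b l * (τ - t)) (b l) t := by
      simpa using ((hasDerivAt_id t).sub_const t).const_mul (b l)
    have h1 : HasDerivAt (fun τ : ℝ => Uf g t X l - b l * (τ - t)) (-b l) t := by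
      simpa using (hasDerivAt_const t (Uf g t X l)).fun_sub hb'
    refine (h1.pow 2).congr_deriv ?_
    norm_num
    ring
  have := hsum.const_mul (1/2 : ℝ)
  refine this.congr_deriv ?_
  rw [Finset.mul_sum, ← Finset.sum_neg_distrib]
  exact Finset.sum_congr rfl fun l _ => by ring

end

private lemma euclid_inner {n : Type*} [Fintype n] (x y : EuclideanSpace ℝ n) :
    (inner ℝ x y : ℝ) = ∑ i, x i * y i := by
  simp [PiLp.inner_apply, RCLike.inner_apply, starRingEnd_apply, star_trivial, mul_comm]

private lemma oP_inner_eq_zero {𝕜 E : Type*} [RCLike 𝕜] [NormedAddCommGroup E]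
    [InnerProductSpace 𝕜 E] {K : Submodule 𝕜 E} [K.HasOrthogonalProjection] (v w : E)
    (hw : w ∈ K) : inner 𝕜 (v - (Submodule.orthogonalProjectionOnto K v : E)) w = 0 := by
  have := K.starProjection_inner_eq_zero v w hw
  rwa [Submodule.starProjection_apply] at this

private lemma oP_inner_left_eq_right {𝕜 E : Type*} [RCLike 𝕜] [NormedAddCommGroup E]
    [InnerProductSpace 𝕜 E] (K : Submodule 𝕜 E) [K.HasOrthogonalProjection] (u v : E) :
    inner 𝕜 (Submodule.orthogonalProjectionOnto K u : E) v
      = inner 𝕜 u (Submodule.orthogonalProjectionOnto K v : E) := by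
  have := K.inner_starProjection_left_eq_right u v
  rwa [Submodule.starProjection_apply, Submodule.starProjection_apply] at this

private lemma oP_eq_self_iff {𝕜 E : Type*} [RCLike 𝕜] [NormedAddCommGroup E]
    [InnerProductSpace 𝕜 E] {K : Submodule 𝕜 E} [K.HasOrthogonalProjection] {v : E} :
    (Submodule.orthogonalProjectionOnto K v : E) = v ↔ v ∈ K := by
  have := K.starProjection_eq_self_iff (v := v)
  rwa [Submodule.starProjection_apply] at this

private lemma cs_sqrt {ι : Type*} (s : Finset ι) (f g : ι → ℝ) :
    ∑ i ∈ s, f i * g i ≤ Real.sqrt (∑ i ∈ s, f i ^ 2) * Real.sqrt (∑ i ∈ s, g i ^ 2) := by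
  have h := Finset.sum_mul_sq_le_sq_mul_sq s f g
  calc ∑ i ∈ s, f i * g i ≤ |∑ i ∈ s, f i * g i| := le_abs_self _
    _ = Real.sqrt ((∑ i ∈ s, f i * g i) ^ 2) := (Real.sqrt_sq_eq_abs _).symm
    _ ≤ Real.sqrt ((∑ i ∈ s, f i ^ 2) * ∑ i ∈ s, g i ^ 2) := Real.sqrt_le_sqrt h
    _ = _ := Real.sqrt_mul (by positivity) _

set_option maxHeartbeats 2000000 in
/-- The key differential inequality for `Q_g`: there is `c₁ = c₁(n,k)` such that, for a
graph `f` with continuous spatial gradient, `|∇f| ≤ 1`, `g ∈ ℱ`, and `S` the tangent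
plane of the graph of `f(·,t)`, evaluating at `(x, f(x,t))`:
`∂Q_g/∂t − S·∇²Q_g ≤ c₁ Q_g^{1/2} |∇f|² |∇²g| − (1/(4k))|∇f − ∇g|² − (1/2)Σ_l |S(𝐠_l)|²`. -/
theorem Q_differential_inequality (k m : ℕ) (hk : 0 < k) (hm : 0 < m) :
    ∃ c₁ : ℝ, ∀ (f : (Fin k → ℝ) → ℝ → Fin m → ℝ)
      (Df : (Fin k → ℝ) → ℝ → Fin m → Fin k → ℝ),
      Continuous (fun p : (Fin k → ℝ) × ℝ => Df p.1 p.2) →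
      (∀ (z : Fin k → ℝ) (t : ℝ), ∑ j, (z j) ^ 2 < 1 → t ∈ Set.Ioo (-1 : ℝ) 1 →
        ∀ (l : Fin m) (j : Fin k),
          HasDerivAt (fun s => f (Function.update z j s) t l) (Df z t l j) (z j)) →
      (∀ (z : Fin k → ℝ) (t : ℝ), ∑ j, (z j) ^ 2 < 1 → t ∈ Set.Ioo (-1 : ℝ) 1 →
        ∑ l, ∑ j, (Df z t l j) ^ 2 ≤ 1) →
      ∀ (a b : Fin m → ℝ) (A : Fin m → Fin k → ℝ)
        (M : Fin m → Matrix (Fin k) (Fin k) ℝ),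
      (∀ l, (M l).IsSymm) → (∀ l, b l = ∑ i, M l i i) →
      ∀ (g : Fin m → (Fin k → ℝ) → ℝ → ℝ),
      (∀ l y t, g l y t =
        a l + b l * t + ∑ i, A l i * y i + (1 / 2) * ∑ i, ∑ j, M l i j * y i * y j) →
      ∀ (Q : (Fin (k + m) → ℝ) → ℝ → ℝ),
      (∀ x t, Q x t = (1 / 2) * ∑ l,
        (x (Fin.natAdd k l) - g l (fun j => x (Fin.castAdd m j)) t) ^ 2) →
      ∀ (x : Fin k → ℝ) (t : ℝ), ∑ j, (x j) ^ 2 < 1 → t ∈ Set.Ioo (-1 : ℝ) 1 →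
      ∀ (X : Fin (k + m) → ℝ),
      (∀ i, X i = Fin.addCases (fun j => x j) (fun l => f x t l) i) →
      ∀ (fvec : Fin k → EuclideanSpace ℝ (Fin (k + m))),
      (∀ j i, fvec j i = Fin.addCases (fun j' => if j' = j then (1:ℝ) else 0)
        (fun l => Df x t l j) i) →
      ∀ (gvec : Fin m → EuclideanSpace ℝ (Fin (k + m))),
      (∀ l i, gvec l i = Fin.addCases (fun j => A l j + ∑ j', M l j j' * x j')
        (fun l' => if l' = l then (-1:ℝ) else 0) i) →
      deriv (fun τ => Q X τ) t
        - ∑ i, ∑ i', (deriv (fun s => deriv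
            (fun s' => Q (Function.update (Function.update X i s) i' s') t)
            ((Function.update X i s) i')) (X i))
          * ((Submodule.orthogonalProjectionOnto (Submodule.span ℝ (Set.range fvec))
              (EuclideanSpace.single i' (1:ℝ)) : EuclideanSpace ℝ (Fin (k + m))) i)
      ≤ c₁ * Real.sqrt (Q X t) * (∑ l, ∑ j, (Df x t l j) ^ 2)
          * Real.sqrt (∑ l, ∑ i, ∑ j, (M l i j) ^ 2)
        - (1 / (4 * (k : ℝ))) * ∑ l, ∑ j,
            (Df x t l j - (A l j + ∑ j', M l j j' * x j')) ^ 2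
        - (1 / 2) * ∑ l, ‖(Submodule.orthogonalProjectionOnto (Submodule.span ℝ (Set.range fvec))
            (gvec l) : EuclideanSpace ℝ (Fin (k + m)))‖ ^ 2 := by
  refine ⟨2, ?_⟩
  intro f Df _hDfc _hDeriv hDfle a b A M hMsymm hb g hg Q hQ x t hx ht X hX fvec hfvec
    gvec hgvec
  set K := Submodule.span ℝ (Set.range fvec) with hK
  -- notation
  set u : Fin m → ℝ := fun l => Uf g t X l with hu
  set Pe : Fin (k+m) → Fin (k+m) → ℝ := fun i' i =>
    ((Submodule.orthogonalProjectionOnto K (EuclideanSpace.single i' (1:ℝ)) : EuclideanSpace ℝ (Fin (k+m))) i)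
    with hPe
  have hyc : (fun j => X (Fin.castAdd m j)) = x := by
    funext j; rw [hX (Fin.castAdd m j)]; exact Fin.addCases_left j
  have hW : ∀ (l : Fin m) (i : Fin (k+m)), Wf A M X l i = -(gvec l i) := by
    intro l i
    induction i using Fin.addCases with
    | left j =>
      have := congrFun hyc
      simp only [Wf, Fin.addCases_left, hgvec l (Fin.castAdd m j), this]
    | right l' =>
      simp only [Wf, Fin.addCases_right, hgvec l (Fin.natAdd k l')]
      by_cases h : l' = l <;> simp [h]
  -- time derivative
  have hQt : deriv (fun τ => Q X τ) t = -∑ l, u l * b l :=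
    (Q_t_hasDeriv a b A M g t hg Q hQ X).deriv
  -- Hessian trace
  set R : Fin m → ℝ := fun l => ∑ j, ∑ j', M l j j' * Pe (Fin.castAdd m j') (Fin.castAdd m j)
    with hR
  have hT : (∑ i, ∑ i', (deriv (fun s => deriv
        (fun s' => Q (Function.update (Function.update X i s) i' s') t)
        ((Function.update X i s) i')) (X i)) * Pe i' i)
      = (∑ l, ‖(Submodule.orthogonalProjectionOnto K (gvec l) : EuclideanSpace ℝ (Fin (k+m)))‖ ^ 2)
        - ∑ l, u l * R l := by
    have hentry : ∀ i i' : Fin (k+m), (deriv (fun s => deriv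
          (fun s' => Q (Function.update (Function.update X i s) i' s') t)
          ((Function.update X i s) i')) (X i))
        = ∑ l, (gvec l i * gvec l i' - u l * MMf M i i' l) := by
      intro i i'
      rw [hess_eq a b A M g t hMsymm hg Q hQ X i i']
      refine Finset.sum_congr rfl fun l _ => ?_
      rw [hW l i, hW l i']
      ring
    simp only [hentry]
    simp only [Finset.sum_sub_distrib, sub_mul, Finset.sum_mul]
    congr 1
    · -- first part : projections of gvec
      rw [Finset.sum_comm]
      have h1 : ∀ i' : Fin (k+m), ∑ i, ∑ l, (gvec l i * gvec l i') * Pe i' i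
          = ∑ l, gvec l i' * ((Submodule.orthogonalProjectionOnto K (gvec l) :
              EuclideanSpace ℝ (Fin (k+m))) i') := by
        intro i'
        rw [Finset.sum_comm]
        refine Finset.sum_congr rfl fun l _ => ?_
        have hproj : ∑ i, gvec l i * Pe i' i
            = (Submodule.orthogonalProjectionOnto K (gvec l) : EuclideanSpace ℝ (Fin (k+m))) i' := by
          have e1 : ∑ i, gvec l i * Pe i' i
              = (inner ℝ (gvec l) ((Submodule.orthogonalProjectionOnto K (EuclideanSpace.single i' (1:ℝ))) :
                  EuclideanSpace ℝ (Fin (k+m))) : ℝ) := (euclid_inner _ _).symm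
          rw [e1, ← oP_inner_left_eq_right K,
            EuclideanSpace.inner_single_right]
          simp
        rw [← hproj, Finset.mul_sum]
        exact Finset.sum_congr rfl fun i _ => by ring
      simp only [h1]
      rw [Finset.sum_comm]
      refine Finset.sum_congr rfl fun l _ => ?_
      have horth := oP_inner_eq_zero (𝕜 := ℝ) (gvec l)
        ((Submodule.orthogonalProjectionOnto K (gvec l) : EuclideanSpace ℝ (Fin (k+m))))
        (SetLike.coe_mem _)
      rw [inner_sub_left, sub_eq_zero] at horth
      have e2 := euclid_inner (gvec l)
        ((Submodule.orthogonalProjectionOnto K (gvec l)) : EuclideanSpace ℝ (Fin (k+m)))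
      rw [horth, real_inner_self_eq_norm_sq] at e2
      rw [← e2]
    · -- second part : the M-block
      rw [Finset.sum_comm]
      have h2 : ∀ i' : Fin (k+m), ∑ i, ∑ l, u l * MMf M i i' l * Pe i' i
          = ∑ l, ∑ i, u l * MMf M i i' l * Pe i' i := fun i' => Finset.sum_comm
      simp only [h2]
      rw [Finset.sum_comm]
      refine Finset.sum_congr rfl fun l _ => ?_
      have hz1 : ∑ l' : Fin m, ∑ i, u l * MMf M i (Fin.natAdd k l') l * Pe (Fin.natAdd k l') i
          = 0 := by
        refine Finset.sum_eq_zero fun l' _ => Finset.sum_eq_zero fun i _ => ?_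
        have : MMf M i (Fin.natAdd k l') l = 0 := by
          induction i using Fin.addCases with
          | left j => simp [MMf, Fin.addCases_left, Fin.addCases_right]
          | right l2 => simp [MMf, Fin.addCases_right]
        rw [this]; ring
      have hz2 : ∀ j' : Fin k, ∑ l' : Fin m,
          u l * MMf M (Fin.natAdd k l') (Fin.castAdd m j') l
            * Pe (Fin.castAdd m j') (Fin.natAdd k l') = 0 := by
        intro j'
        refine Finset.sum_eq_zero fun l' _ => ?_
        simp [MMf, Fin.addCases_right]
      calc ∑ i', ∑ i, u l * MMf M i i' l * Pe i' i
          = ∑ j' : Fin k, ∑ i, u l * MMf M i (Fin.castAdd m j') l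
              * Pe (Fin.castAdd m j') i := by
            rw [Fin.sum_univ_add (fun i' => ∑ i, u l * MMf M i i' l * Pe i' i), hz1,
              add_zero]
        _ = ∑ j' : Fin k, ∑ j : Fin k, u l * M l j j'
              * Pe (Fin.castAdd m j') (Fin.castAdd m j) := by
            refine Finset.sum_congr rfl fun j' _ => ?_
            rw [Fin.sum_univ_add (fun i => u l * MMf M i (Fin.castAdd m j') l
              * Pe (Fin.castAdd m j') i), hz2 j', add_zero]
            refine Finset.sum_congr rfl fun j _ => ?_
            simp only [MMf, Fin.addCases_left]
        _ = u l * R l := by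
            rw [hR, Finset.mul_sum, Finset.sum_comm]
            refine Finset.sum_congr rfl fun j' _ => ?_
            rw [Finset.mul_sum]
            exact Finset.sum_congr rfl fun j _ => by ring
  rw [hQt, hT]
  -- main estimates
  have hF0 : (0:ℝ) ≤ ∑ l, ∑ j, (Df x t l j) ^ 2 := by positivity
  have hF1 : ∑ l, ∑ j, (Df x t l j) ^ 2 ≤ 1 := hDfle x t hx ht
  have E1 : ∑ l, u l * (R l - b l)
      ≤ 2 * Real.sqrt (Q X t) * (∑ l, ∑ j, (Df x t l j) ^ 2)
        * Real.sqrt (∑ l, ∑ i, ∑ j, (M l i j) ^ 2) := by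
    have hfmem : ∀ j, fvec j ∈ K := fun j => Submodule.subset_span (Set.mem_range_self j)
    have hPf : ∀ j, ((Submodule.orthogonalProjectionOnto K (fvec j)) : EuclideanSpace ℝ (Fin (k+m)))
        = fvec j := fun j => oP_eq_self_iff.mpr (hfmem j)
    set e : Fin k → EuclideanSpace ℝ (Fin (k+m)) :=
      fun j => EuclideanSpace.single (Fin.castAdd m j) (1:ℝ) with he
    set w : Fin k → EuclideanSpace ℝ (Fin (k+m)) :=
      fun j => e j - (Submodule.orthogonalProjectionOnto K (e j) : EuclideanSpace ℝ (Fin (k+m))) with hw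
    set vy : Fin k → EuclideanSpace ℝ (Fin (k+m)) := fun j => fvec j - e j with hvy
    set r : Fin k → ℝ := fun j => Real.sqrt (∑ l, Df x t l j ^ 2) with hr
    -- norm of w j is at most r j
    have hnw : ∀ j, ‖w j‖ ≤ r j := by
      intro j
      have hwv : w j = (Submodule.orthogonalProjectionOnto K (vy j) : EuclideanSpace ℝ (Fin (k+m)))
          - vy j := by
        have h1 : e j = fvec j - vy j := by simp [hvy]
        rw [hw]
        simp only [h1, map_sub]
        push_cast
        rw [hPf j]
        abel
      have hnvy : ‖vy j‖ = r j := by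
        have h2 : ‖vy j‖ ^ 2 = ∑ l, Df x t l j ^ 2 := by
          rw [← real_inner_self_eq_norm_sq, euclid_inner,
            Fin.sum_univ_add (fun i => vy j i * vy j i)]
          have hz : ∀ j' : Fin k, vy j (Fin.castAdd m j') * vy j (Fin.castAdd m j') = 0 := by
            intro j'
            have : vy j (Fin.castAdd m j') = 0 := by
              simp only [hvy, PiLp.sub_apply, hfvec, Fin.addCases_left, he,
                EuclideanSpace.single_apply]
              by_cases h : j' = j <;> simp [h, Fin.ext_iff]
              · omega
            rw [this]; ring
          have hv : ∀ l' : Fin m, vy j (Fin.natAdd k l') * vy j (Fin.natAdd k l')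
              = Df x t l' j ^ 2 := by
            intro l'
            have : vy j (Fin.natAdd k l') = Df x t l' j := by
              simp only [hvy, PiLp.sub_apply, hfvec, Fin.addCases_right, he,
                EuclideanSpace.single_apply]
              have : ¬((Fin.natAdd k l') = Fin.castAdd m j) := by
                simp [Fin.ext_iff]; omega
              simp [this]
            rw [this]; ring
          rw [Finset.sum_congr rfl fun j' _ => hz j', Finset.sum_congr rfl fun l' _ => hv l']
          simp
        simp only [hr]
        rw [← h2, Real.sqrt_sq (norm_nonneg _)]
      rw [hwv, ← hnvy, norm_sub_rev]
      have horth := oP_inner_eq_zero (𝕜 := ℝ) (vy j)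
        ((Submodule.orthogonalProjectionOnto K (vy j) : EuclideanSpace ℝ (Fin (k+m)))) (SetLike.coe_mem _)
      have hpyth := norm_add_sq_real
        (vy j - (Submodule.orthogonalProjectionOnto K (vy j) : EuclideanSpace ℝ (Fin (k+m))))
        ((Submodule.orthogonalProjectionOnto K (vy j) : EuclideanSpace ℝ (Fin (k+m))))
      rw [sub_add_cancel, horth] at hpyth
      have h3 : ‖vy j - (Submodule.orthogonalProjectionOnto K (vy j) :
          EuclideanSpace ℝ (Fin (k+m)))‖ ^ 2 ≤ ‖vy j‖ ^ 2 := by nlinarith [sq_nonneg ‖(Submodule.orthogonalProjectionOnto K (vy j) : EuclideanSpace ℝ (Fin (k+m)))‖]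
      exact (pow_le_pow_iff_left₀ (norm_nonneg _) (norm_nonneg _) two_ne_zero).mp h3
    have hrnn : ∀ j, 0 ≤ r j := fun j => Real.sqrt_nonneg _
    -- entry bound for the projection error
    have hE : ∀ j j' : Fin k,
        |Pe (Fin.castAdd m j') (Fin.castAdd m j) - (if j = j' then 1 else 0)|
          ≤ ‖w j‖ * ‖w j'‖ := by
      intro j j'
      have h1 : Pe (Fin.castAdd m j') (Fin.castAdd m j)
          = (inner ℝ (e j) ((Submodule.orthogonalProjectionOnto K (e j') :
              EuclideanSpace ℝ (Fin (k+m)))) : ℝ) := by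
        rw [he]
        simp only [EuclideanSpace.inner_single_left]
        simp [hPe]
      have h2 : ((if j = j' then 1 else 0) : ℝ) = (inner ℝ (e j) (e j') : ℝ) := by
        rw [he]
        simp only [EuclideanSpace.inner_single_left, EuclideanSpace.single_apply]
        have : (Fin.castAdd m j = Fin.castAdd m j') ↔ (j = j') :=
          (Fin.castAdd_injective k m).eq_iff
        by_cases h : j = j' <;> simp [h, this]
      have h3 : Pe (Fin.castAdd m j') (Fin.castAdd m j) - (if j = j' then 1 else 0)
          = -(inner ℝ (e j) (w j') : ℝ) := by
        rw [h1, h2, hw]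
        simp only [inner_sub_right]
        ring
      have h4 : (inner ℝ (e j) (w j') : ℝ) = (inner ℝ (w j) (w j') : ℝ) := by
        have h5 : e j = w j + (Submodule.orthogonalProjectionOnto K (e j) :
            EuclideanSpace ℝ (Fin (k+m))) := (sub_add_cancel _ _).symm
        rw [h5, inner_add_left]
        have h6 := oP_inner_eq_zero (𝕜 := ℝ) (e j')
          ((Submodule.orthogonalProjectionOnto K (e j) : EuclideanSpace ℝ (Fin (k+m)))) (SetLike.coe_mem _)
        have : (inner ℝ ((Submodule.orthogonalProjectionOnto K (e j) : EuclideanSpace ℝ (Fin (k+m))))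
            (w j') : ℝ) = 0 := by
          rw [real_inner_comm]
          exact h6
        rw [this, add_zero]
      rw [h3, abs_neg, h4]
      exact abs_real_inner_le_norm _ _
    -- per-l bound
    have hd : ∀ l, |R l - b l| ≤ (∑ l', ∑ j, (Df x t l' j) ^ 2)
        * Real.sqrt (∑ i, ∑ j, (M l i j) ^ 2) := by
      intro l
      have h1 : R l - b l = ∑ j, ∑ j', M l j j'
          * (Pe (Fin.castAdd m j') (Fin.castAdd m j) - (if j = j' then 1 else 0)) := by
        rw [hR, hb l, ← Finset.sum_sub_distrib]
        refine Finset.sum_congr rfl fun j _ => ?_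
        have : ∑ j', M l j j' * ((if j = j' then 1 else 0) : ℝ) = M l j j := by
          have hite : ∀ j', M l j j' * ((if j = j' then 1 else 0) : ℝ)
              = if j = j' then M l j j' else 0 := by
            intro j'; by_cases h : j = j' <;> simp [h]
          rw [Finset.sum_congr rfl fun j' _ => hite j', Finset.sum_ite_eq Finset.univ j]
          simp
        rw [← this, ← Finset.sum_sub_distrib]
        exact Finset.sum_congr rfl fun j' _ => by ring
      rw [h1]
      calc |∑ j, ∑ j', M l j j'
            * (Pe (Fin.castAdd m j') (Fin.castAdd m j) - (if j = j' then 1 else 0))|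
          ≤ ∑ j, ∑ j', |M l j j'| * (‖w j‖ * ‖w j'‖) := by
            refine le_trans (Finset.abs_sum_le_sum_abs _ _) (Finset.sum_le_sum fun j _ => ?_)
            refine le_trans (Finset.abs_sum_le_sum_abs _ _) (Finset.sum_le_sum fun j' _ => ?_)
            rw [abs_mul]
            exact mul_le_mul_of_nonneg_left (hE j j') (abs_nonneg _)
        _ = ∑ p ∈ Finset.univ ×ˢ Finset.univ,
              |M l p.1 p.2| * (‖w p.1‖ * ‖w p.2‖) := by rw [Finset.sum_product]
        _ ≤ Real.sqrt (∑ p ∈ Finset.univ ×ˢ Finset.univ, |M l p.1 p.2| ^ 2)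
            * Real.sqrt (∑ p ∈ Finset.univ ×ˢ Finset.univ, (‖w p.1‖ * ‖w p.2‖) ^ 2) :=
            cs_sqrt _ _ _
        _ ≤ Real.sqrt (∑ i, ∑ j, (M l i j) ^ 2) * (∑ l', ∑ j, (Df x t l' j) ^ 2) := by
            refine mul_le_mul ?_ ?_ (Real.sqrt_nonneg _) (Real.sqrt_nonneg _)
            · rw [Finset.sum_product]
              refine le_of_eq (congrArg Real.sqrt ?_)
              exact Finset.sum_congr rfl fun i _ => Finset.sum_congr rfl fun j _ => sq_abs _
            · have hprod : ∑ p ∈ Finset.univ ×ˢ Finset.univ, (‖w p.1‖ * ‖w p.2‖) ^ 2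
                  = (∑ j, ‖w j‖ ^ 2) * (∑ j, ‖w j‖ ^ 2) := by
                rw [Finset.sum_product, Finset.sum_mul_sum]
                exact Finset.sum_congr rfl fun i _ => Finset.sum_congr rfl fun j _ => by ring
              rw [hprod, Real.sqrt_mul_self (by positivity)]
              have hwr : ∑ j, ‖w j‖ ^ 2 ≤ ∑ j, r j ^ 2 :=
                Finset.sum_le_sum fun j _ => pow_le_pow_left₀ (norm_nonneg _) (hnw j) 2
              have hrF : ∑ j, r j ^ 2 = ∑ l', ∑ j, (Df x t l' j) ^ 2 := by
                rw [Finset.sum_comm]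
                refine Finset.sum_congr rfl fun j _ => ?_
                rw [hr, Real.sq_sqrt (by positivity)]
              linarith
        _ = _ := by ring
    -- assemble
    have hQval : ∑ l, u l ^ 2 = 2 * Q X t := by
      rw [hQ X t]
      have hul : ∀ l : Fin m, u l ^ 2
          = (X (Fin.natAdd k l) - g l (fun j => X (Fin.castAdd m j)) t) ^ 2 :=
        fun l => rfl
      rw [Finset.sum_congr rfl fun l _ => hul l]
      ring
    have hsum0 : (0:ℝ) ≤ ∑ l, u l ^ 2 := Finset.sum_nonneg fun l _ => sq_nonneg (u l)
    have hQnn : 0 ≤ Q X t := by linarith [hQval, hsum0]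
    calc ∑ l, u l * (R l - b l)
        ≤ ∑ l, |u l| * ((∑ l', ∑ j, (Df x t l' j) ^ 2)
            * Real.sqrt (∑ i, ∑ j, (M l i j) ^ 2)) := by
          refine Finset.sum_le_sum fun l _ => ?_
          calc u l * (R l - b l) ≤ |u l * (R l - b l)| := le_abs_self _
            _ = |u l| * |R l - b l| := abs_mul _ _
            _ ≤ _ := mul_le_mul_of_nonneg_left (hd l) (abs_nonneg _)
      _ = (∑ l', ∑ j, (Df x t l' j) ^ 2)
            * ∑ l, |u l| * Real.sqrt (∑ i, ∑ j, (M l i j) ^ 2) := by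
          rw [Finset.mul_sum]
          exact Finset.sum_congr rfl fun l _ => by ring
      _ ≤ (∑ l', ∑ j, (Df x t l' j) ^ 2)
            * (Real.sqrt (∑ l, |u l| ^ 2)
              * Real.sqrt (∑ l, Real.sqrt (∑ i, ∑ j, (M l i j) ^ 2) ^ 2)) :=
          mul_le_mul_of_nonneg_left (cs_sqrt _ _ _) hF0
      _ = (∑ l', ∑ j, (Df x t l' j) ^ 2)
            * (Real.sqrt (2 * Q X t) * Real.sqrt (∑ l, ∑ i, ∑ j, (M l i j) ^ 2)) := by
          congr 2
          · rw [← hQval]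
            exact congrArg Real.sqrt (Finset.sum_congr rfl fun l _ => sq_abs _)
          · exact congrArg Real.sqrt (Finset.sum_congr rfl fun l _ =>
              Real.sq_sqrt (by positivity))
      _ ≤ (∑ l', ∑ j, (Df x t l' j) ^ 2)
            * ((2 * Real.sqrt (Q X t)) * Real.sqrt (∑ l, ∑ i, ∑ j, (M l i j) ^ 2)) := by
          refine mul_le_mul_of_nonneg_left ?_ hF0
          refine mul_le_mul_of_nonneg_right ?_ (Real.sqrt_nonneg _)
          rw [Real.sqrt_mul (by norm_num : (0:ℝ) ≤ 2)]
          refine mul_le_mul_of_nonneg_right ?_ (Real.sqrt_nonneg _)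
          nlinarith [Real.sq_sqrt (show (0:ℝ) ≤ 2 by norm_num), Real.sqrt_nonneg 2]
      _ = _ := by ring
  have E2 : (1 / (4 * (k:ℝ))) * ∑ l, ∑ j,
        (Df x t l j - (A l j + ∑ j', M l j j' * x j')) ^ 2
      ≤ (1/2) * ∑ l, ‖(Submodule.orthogonalProjectionOnto K (gvec l) : EuclideanSpace ℝ (Fin (k+m)))‖ ^ 2 := by
    have hfmem : ∀ j, fvec j ∈ K := fun j => Submodule.subset_span (Set.mem_range_self j)
    have hPf : ∀ j, ((Submodule.orthogonalProjectionOnto K (fvec j)) : EuclideanSpace ℝ (Fin (k+m)))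
        = fvec j := fun j => oP_eq_self_iff.mpr (hfmem j)
    have hinner : ∀ l j, (inner ℝ (gvec l) (fvec j) : ℝ)
        = (A l j + ∑ j', M l j j' * x j') - Df x t l j := by
      intro l j
      rw [euclid_inner, Fin.sum_univ_add (fun i => gvec l i * fvec j i)]
      have hsp : ∑ j' : Fin k, gvec l (Fin.castAdd m j') * fvec j (Fin.castAdd m j')
          = A l j + ∑ j2, M l j j2 * x j2 := by
        have h : ∀ j', gvec l (Fin.castAdd m j') * fvec j (Fin.castAdd m j')
            = if j' = j then (A l j + ∑ j2, M l j j2 * x j2) else 0 := by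
          intro j'
          rw [hgvec, hfvec]
          simp only [Fin.addCases_left]
          by_cases h : j' = j <;> simp [h]
        rw [Finset.sum_congr rfl fun j' _ => h j',
          Finset.sum_ite_eq' Finset.univ j (fun _ => A l j + ∑ j2, M l j j2 * x j2)]
        simp
      have hvt : ∑ l' : Fin m, gvec l (Fin.natAdd k l') * fvec j (Fin.natAdd k l')
          = -Df x t l j := by
        have h : ∀ l', gvec l (Fin.natAdd k l') * fvec j (Fin.natAdd k l')
            = if l' = l then -Df x t l j else 0 := by
          intro l'
          rw [hgvec, hfvec]
          simp only [Fin.addCases_right]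
          by_cases h : l' = l <;> simp [h]
        rw [Finset.sum_congr rfl fun l' _ => h l',
          Finset.sum_ite_eq' Finset.univ l (fun _ => -Df x t l j)]
        simp
      rw [hsp, hvt]
      ring
    have hPginner : ∀ l j,
        (inner ℝ ((Submodule.orthogonalProjectionOnto K (gvec l)) : EuclideanSpace ℝ (Fin (k+m)))
          (fvec j) : ℝ) = (A l j + ∑ j', M l j j' * x j') - Df x t l j := by
      intro l j
      rw [oP_inner_left_eq_right, hPf j, hinner]
    have hnf : ∀ j, ‖fvec j‖ ^ 2 ≤ 2 := by
      intro j
      have he : ‖fvec j‖ ^ 2 = ∑ i, fvec j i * fvec j i := by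
        rw [← real_inner_self_eq_norm_sq, euclid_inner]
      rw [he, Fin.sum_univ_add (fun i => fvec j i * fvec j i)]
      have h1 : ∑ j' : Fin k, fvec j (Fin.castAdd m j') * fvec j (Fin.castAdd m j')
          = 1 := by
        have h : ∀ j', fvec j (Fin.castAdd m j') * fvec j (Fin.castAdd m j')
            = if j' = j then 1 else 0 := by
          intro j'
          rw [hfvec]
          simp only [Fin.addCases_left]
          by_cases h : j' = j <;> simp [h]
        rw [Finset.sum_congr rfl fun j' _ => h j',
          Finset.sum_ite_eq' Finset.univ j (fun _ => (1:ℝ))]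
        simp
      have h2 : ∑ l' : Fin m, fvec j (Fin.natAdd k l') * fvec j (Fin.natAdd k l') ≤ 1 := by
        have he2 : ∀ l', fvec j (Fin.natAdd k l') * fvec j (Fin.natAdd k l')
            = Df x t l' j ^ 2 := by
          intro l'
          rw [hfvec]
          simp only [Fin.addCases_right]
          ring
        rw [Finset.sum_congr rfl fun l' _ => he2 l']
        refine le_trans (Finset.sum_le_sum fun l' _ => ?_) hF1
        exact Finset.single_le_sum (fun j2 _ => sq_nonneg (Df x t l' j2))
          (Finset.mem_univ j)
      linarith
    have hterm : ∀ l j, (Df x t l j - (A l j + ∑ j', M l j j' * x j')) ^ 2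
        ≤ 2 * ‖(Submodule.orthogonalProjectionOnto K (gvec l) : EuclideanSpace ℝ (Fin (k+m)))‖ ^ 2 := by
      intro l j
      have habs := abs_real_inner_le_norm
        ((Submodule.orthogonalProjectionOnto K (gvec l)) : EuclideanSpace ℝ (Fin (k+m))) (fvec j)
      have hsq : ((A l j + ∑ j', M l j j' * x j') - Df x t l j) ^ 2
          ≤ ‖(Submodule.orthogonalProjectionOnto K (gvec l) : EuclideanSpace ℝ (Fin (k+m)))‖ ^ 2
            * ‖fvec j‖ ^ 2 := by
        rw [← hPginner l j, ← mul_pow]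
        calc (inner ℝ ((Submodule.orthogonalProjectionOnto K (gvec l)) : EuclideanSpace ℝ (Fin (k+m)))
              (fvec j) : ℝ) ^ 2
            = |(inner ℝ ((Submodule.orthogonalProjectionOnto K (gvec l)) : EuclideanSpace ℝ (Fin (k+m)))
              (fvec j) : ℝ)| ^ 2 := (sq_abs _).symm
          _ ≤ _ := pow_le_pow_left₀ (abs_nonneg _) habs 2
      have hrw : (Df x t l j - (A l j + ∑ j', M l j j' * x j')) ^ 2
          = ((A l j + ∑ j', M l j j' * x j') - Df x t l j) ^ 2 := by ring
      have hn0 : (0:ℝ) ≤ ‖(Submodule.orthogonalProjectionOnto K (gvec l) :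
          EuclideanSpace ℝ (Fin (k+m)))‖ ^ 2 := sq_nonneg _
      nlinarith [hnf j]
    have hsum : ∑ l, ∑ j, (Df x t l j - (A l j + ∑ j', M l j j' * x j')) ^ 2
        ≤ (2 * k) * ∑ l, ‖(Submodule.orthogonalProjectionOnto K (gvec l) :
            EuclideanSpace ℝ (Fin (k+m)))‖ ^ 2 := by
      rw [Finset.mul_sum]
      refine Finset.sum_le_sum fun l _ => ?_
      calc ∑ j, (Df x t l j - (A l j + ∑ j', M l j j' * x j')) ^ 2
          ≤ ∑ _j : Fin k, 2 * ‖(Submodule.orthogonalProjectionOnto K (gvec l) :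
              EuclideanSpace ℝ (Fin (k+m)))‖ ^ 2 := Finset.sum_le_sum fun j _ => hterm l j
        _ = (2 * k) * ‖(Submodule.orthogonalProjectionOnto K (gvec l) :
              EuclideanSpace ℝ (Fin (k+m)))‖ ^ 2 := by
            rw [Finset.sum_const, Finset.card_univ, Fintype.card_fin, nsmul_eq_mul]
            ring
    have hk' : (0:ℝ) < (k:ℝ) := by exact_mod_cast hk
    have h14 : (0:ℝ) < 1 / (4 * (k:ℝ)) := by positivity
    calc (1 / (4 * (k:ℝ))) * ∑ l, ∑ j,
          (Df x t l j - (A l j + ∑ j', M l j j' * x j')) ^ 2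
        ≤ (1 / (4 * (k:ℝ))) * ((2 * k) * ∑ l, ‖(Submodule.orthogonalProjectionOnto K (gvec l) :
            EuclideanSpace ℝ (Fin (k+m)))‖ ^ 2) :=
          mul_le_mul_of_nonneg_left hsum (le_of_lt h14)
      _ = (1/2) * ∑ l, ‖(Submodule.orthogonalProjectionOnto K (gvec l) :
            EuclideanSpace ℝ (Fin (k+m)))‖ ^ 2 := by
          field_simp
          ring
  have hsplit : ∑ l, u l * (R l - b l) = (∑ l, u l * R l) - ∑ l, u l * b l := by
    rw [← Finset.sum_sub_distrib]
    exact Finset.sum_congr rfl fun l _ => by ring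
  linarith [E1, E2, hsplit]
end

section
/- There exists c₁ = c₁(n,k) such that under the same hypotheses (f differentiable graph with |∇f| ≤ 1, g ∈ ℱ, S the tangent plane of graph f(·,t)), for each l ∈ {k+1,...,n}: ∂g_l/∂t − S·∇²g_l ≤ c₁ |∇f|² |∇²g_l|. -/
lemma proj_entry_est {E : Type*} [NormedAddCommGroup E] [InnerProductSpace ℝ E]
    (V : Submodule ℝ E) [V.HasOrthogonalProjection] (e₁ e₂ w₁ w₂ : E)
    (h1 : e₁ + w₁ ∈ V) (h2 : e₂ + w₂ ∈ V) :
    |(inner ℝ e₁ e₂ : ℝ) - (inner ℝ e₁ ((V.orthogonalProjectionOnto e₂ : E)) : ℝ)| ≤ ‖w₁‖ * ‖w₂‖ := by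
  set P := V.orthogonalProjectionOnto with hP
  have hkey : ∀ (e w : E), e + w ∈ V → e - (P e : E) = (P w : E) - w := by
    intro e w h
    have h' : (P (e + w) : E) = e + w := Submodule.starProjection_eq_self_iff.mpr h
    have : (P e : E) + (P w : E) = e + w := by rw [← h', map_add]; push_cast; ring
    have : (P e : E) = e + w - (P w : E) := by linear_combination (norm := abel_nf) this
    rw [this]; abel
  have hu2 : e₂ - (P e₂ : E) = (P w₂ : E) - w₂ := hkey e₂ w₂ h2
  have hmem2 : e₂ - (P e₂ : E) ∈ Vᗮ := Submodule.sub_starProjection_mem_orthogonal _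
  have hsplit : (inner ℝ e₁ e₂ : ℝ) - (inner ℝ e₁ ((P e₂ : E)) : ℝ)
      = (inner ℝ (e₁ - (P e₁ : E)) (e₂ - (P e₂ : E)) : ℝ) := by
    rw [← inner_sub_right]
    have : (inner ℝ ((P e₁ : E)) (e₂ - (P e₂ : E)) : ℝ) = 0 :=
      Submodule.inner_right_of_mem_orthogonal (Submodule.coe_mem _) hmem2
    calc (inner ℝ e₁ (e₂ - (P e₂ : E)) : ℝ)
        = (inner ℝ (e₁ - (P e₁ : E)) (e₂ - (P e₂ : E)) : ℝ)
          + (inner ℝ ((P e₁ : E)) (e₂ - (P e₂ : E)) : ℝ) := by rw [← inner_add_left]; congr 1; abel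
      _ = _ := by rw [this, add_zero]
  have hn : ∀ (e w : E), e + w ∈ V → ‖e - (P e : E)‖ ≤ ‖w‖ := by
    intro e w h
    rw [hkey e w h, ← neg_sub, norm_neg, show w - (P w : E) = (Vᗮ.orthogonalProjectionOnto w : E) from
      (V.starProjection_orthogonal_val w).symm]
    calc ‖(Vᗮ.orthogonalProjectionOnto w : E)‖
        ≤ ‖Vᗮ.orthogonalProjectionOnto‖ * ‖w‖ := (Vᗮ.orthogonalProjectionOnto).le_opNorm w
      _ ≤ 1 * ‖w‖ := mul_le_mul_of_nonneg_right (Submodule.orthogonalProjectionOnto_norm_le _) (norm_nonneg _)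
      _ = ‖w‖ := one_mul _
  rw [hsplit]
  calc |(inner ℝ (e₁ - (P e₁ : E)) (e₂ - (P e₂ : E)) : ℝ)|
      ≤ ‖e₁ - (P e₁ : E)‖ * ‖e₂ - (P e₂ : E)‖ := abs_real_inner_le_norm _ _
    _ ≤ ‖w₁‖ * ‖w₂‖ := mul_le_mul (hn e₁ w₁ h1) (hn e₂ w₂ h2) (norm_nonneg _) (norm_nonneg _)


/-- There is `c₁ = c₁(n,k)` such that, under the same hypotheses (graph `f` with
`|∇f| ≤ 1`, `g ∈ ℱ`, `S` the tangent plane of graph `f(·,t)`), for each component `g_l`: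
`∂g_l/∂t − S·∇²g_l ≤ c₁ |∇f|² |∇²g_l|`. -/
theorem g_component_differential_inequality (k m : ℕ) (hk : 0 < k) (hm : 0 < m) :
    ∃ c₁ : ℝ, ∀ (f : (Fin k → ℝ) → ℝ → Fin m → ℝ)
      (Df : (Fin k → ℝ) → ℝ → Fin m → Fin k → ℝ),
      Continuous (fun p : (Fin k → ℝ) × ℝ => Df p.1 p.2) →
      (∀ (z : Fin k → ℝ) (t : ℝ), ∑ j, (z j) ^ 2 < 1 → t ∈ Set.Ioo (-1 : ℝ) 1 →
        ∀ (l : Fin m) (j : Fin k),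
          HasDerivAt (fun s => f (Function.update z j s) t l) (Df z t l j) (z j)) →
      (∀ (z : Fin k → ℝ) (t : ℝ), ∑ j, (z j) ^ 2 < 1 → t ∈ Set.Ioo (-1 : ℝ) 1 →
        ∑ l, ∑ j, (Df z t l j) ^ 2 ≤ 1) →
      ∀ (a b : Fin m → ℝ) (A : Fin m → Fin k → ℝ)
        (M : Fin m → Matrix (Fin k) (Fin k) ℝ),
      (∀ l, (M l).IsSymm) → (∀ l, b l = ∑ i, M l i i) →
      ∀ (g : Fin m → (Fin k → ℝ) → ℝ → ℝ),
      (∀ l y t, g l y t =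
        a l + b l * t + ∑ i, A l i * y i + (1 / 2) * ∑ i, ∑ j, M l i j * y i * y j) →
      ∀ (x : Fin k → ℝ) (t : ℝ), ∑ j, (x j) ^ 2 < 1 → t ∈ Set.Ioo (-1 : ℝ) 1 →
      ∀ (fvec : Fin k → EuclideanSpace ℝ (Fin (k + m))),
      (∀ j i, fvec j i = Fin.addCases (fun j' => if j' = j then (1:ℝ) else 0)
        (fun l => Df x t l j) i) →
      ∀ l : Fin m,
      deriv (fun τ => g l x τ) t
        - ∑ i, ∑ i', ((Fin.addCases
              (fun p => Fin.addCases (fun q => M l p q) (fun _ => (0:ℝ)) i')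
              (fun _ => (0:ℝ)) i)
            * ((Submodule.orthogonalProjectionOnto (Submodule.span ℝ (Set.range fvec))
              (EuclideanSpace.single i' (1:ℝ)) : EuclideanSpace ℝ (Fin (k + m))) i))
      ≤ c₁ * (∑ l', ∑ j, (Df x t l' j) ^ 2)
          * Real.sqrt (∑ i, ∑ j, (M l i j) ^ 2) := by
  refine ⟨1, ?_⟩
  intro f Df _ _ _ a b A M _ hb g hg x t hx ht fvec hfvec l
  have hderiv_g : deriv (fun τ => g l x τ) t = b l := by
    have hfun : (fun τ => g l x τ) = fun τ =>
        (a l + ∑ i, A l i * x i + (1 / 2) * ∑ i, ∑ j, M l i j * x i * x j) + b l * τ := by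
      funext τ; rw [hg]; ring
    rw [hfun]
    have h : HasDerivAt (fun τ : ℝ =>
        (a l + ∑ i, A l i * x i + (1 / 2) * ∑ i, ∑ j, M l i j * x i * x j) + b l * τ)
        (b l) t := by
      simpa using ((hasDerivAt_id t).const_mul (b l)).const_add
        (a l + ∑ i, A l i * x i + (1 / 2) * ∑ i, ∑ j, M l i j * x i * x j)
    exact h.deriv
  set V : Submodule ℝ (EuclideanSpace ℝ (Fin (k + m))) :=
    Submodule.span ℝ (Set.range fvec) with hV
  set P := V.orthogonalProjectionOnto with hP
  -- reduce the (k+m)² sum to a k² sum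
  have hsum : (∑ i, ∑ i', ((Fin.addCases
          (fun p => Fin.addCases (fun q => M l p q) (fun _ => (0:ℝ)) i')
          (fun _ => (0:ℝ)) i)
        * ((P (EuclideanSpace.single i' (1:ℝ)) : EuclideanSpace ℝ (Fin (k + m))) i)))
      = ∑ p : Fin k, ∑ q : Fin k, M l p q *
          ((P (EuclideanSpace.single (Fin.castAdd m q) (1:ℝ)) :
            EuclideanSpace ℝ (Fin (k + m))) (Fin.castAdd m p)) := by
    rw [Fin.sum_univ_add]
    simp only [Fin.addCases_right, zero_mul, Finset.sum_const_zero, add_zero, Fin.addCases_left]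
    refine Finset.sum_congr rfl fun p _ => ?_
    rw [Fin.sum_univ_add]
    simp only [Fin.addCases_left, Fin.addCases_right, zero_mul, Finset.sum_const_zero, add_zero]
  -- the correction vectors
  obtain ⟨w, hwp⟩ : ∃ w : Fin k → EuclideanSpace ℝ (Fin (k + m)),
      ∀ p, w p = fvec p - EuclideanSpace.single (Fin.castAdd m p) (1:ℝ) :=
    ⟨_, fun p => rfl⟩
  have hmemV : ∀ p : Fin k, EuclideanSpace.single (Fin.castAdd m p) (1:ℝ) + w p ∈ V := by
    intro p
    have : EuclideanSpace.single (Fin.castAdd m p) (1:ℝ) + w p = fvec p := by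
      rw [add_comm (EuclideanSpace.single (Fin.castAdd m p) (1:ℝ)) (w p), hwp p, sub_add_cancel]
    rw [this]
    exact Submodule.subset_span (Set.mem_range_self p)
  have hwnorm : ∀ p, ‖w p‖ ^ 2 = ∑ l', (Df x t l' p) ^ 2 := by
    intro p
    rw [EuclideanSpace.norm_eq, Real.sq_sqrt (by positivity), Fin.sum_univ_add]
    have h1 : ∀ j : Fin k, (w p) (Fin.castAdd m j) = 0 := by
      intro j
      rw [hwp p]
      show fvec p (Fin.castAdd m j) - EuclideanSpace.single (Fin.castAdd m p) (1:ℝ) (Fin.castAdd m j) = 0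
      rw [hfvec, Fin.addCases_left, EuclideanSpace.single_apply]
      by_cases hjp : j = p
      · simp [hjp]
      · have : (Fin.castAdd m j : Fin (k + m)) ≠ Fin.castAdd m p := by
          simpa [Fin.ext_iff] using fun h => hjp (Fin.ext h)
        simp [hjp, this]
    have h2 : ∀ l' : Fin m, (w p) (Fin.natAdd k l') = Df x t l' p := by
      intro l'
      rw [hwp p]
      show fvec p (Fin.natAdd k l') - EuclideanSpace.single (Fin.castAdd m p) (1:ℝ) (Fin.natAdd k l') = Df x t l' p
      rw [hfvec, Fin.addCases_right, EuclideanSpace.single_apply]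
      have hne : (Fin.natAdd k l' : Fin (k + m)) ≠ Fin.castAdd m p := by
        intro h
        have h2 := congrArg Fin.val h
        simp at h2
        omega
      simp [hne]
    simp [h1, h2, Real.norm_eq_abs, sq_abs]
  -- key entry estimate
  have hkey : ∀ p q : Fin k,
      |(if p = q then (1:ℝ) else 0) -
          ((P (EuclideanSpace.single (Fin.castAdd m q) (1:ℝ)) :
            EuclideanSpace ℝ (Fin (k + m))) (Fin.castAdd m p))|
        ≤ ‖w p‖ * ‖w q‖ := by
    intro p q
    have hi1 : (inner ℝ (EuclideanSpace.single (Fin.castAdd m p) (1:ℝ))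
        (EuclideanSpace.single (Fin.castAdd m q) (1:ℝ)) : ℝ) = if p = q then (1:ℝ) else 0 := by
      rw [EuclideanSpace.inner_single_left]
      simp only [map_one, one_mul, EuclideanSpace.single_apply]
      by_cases hpq : p = q
      · simp [hpq]
      · have : (Fin.castAdd m p : Fin (k + m)) ≠ Fin.castAdd m q := by
          simpa [Fin.ext_iff] using fun h => hpq (Fin.ext h)
        simp [hpq, this]
    have hi2 : (inner ℝ (EuclideanSpace.single (Fin.castAdd m p) (1:ℝ))
        ((P (EuclideanSpace.single (Fin.castAdd m q) (1:ℝ)) :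
          EuclideanSpace ℝ (Fin (k + m)))) : ℝ)
        = (P (EuclideanSpace.single (Fin.castAdd m q) (1:ℝ)) :
            EuclideanSpace ℝ (Fin (k + m))) (Fin.castAdd m p) := by
      rw [EuclideanSpace.inner_single_left]; simp
    rw [← hi1, ← hi2]
    exact proj_entry_est V _ _ _ _ (hmemV p) (hmemV q)
  have hbl : b l = ∑ p : Fin k, ∑ q : Fin k, M l p q * (if p = q then (1:ℝ) else 0) := by
    rw [hb]
    refine Finset.sum_congr rfl fun p _ => ?_
    simp
  rw [hderiv_g, hsum, hbl, ← Finset.sum_sub_distrib]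
  simp only [← Finset.sum_sub_distrib, ← mul_sub]
  have step1 : ∑ p : Fin k, ∑ q : Fin k, M l p q *
        ((if p = q then (1:ℝ) else 0) -
          ((P (EuclideanSpace.single (Fin.castAdd m q) (1:ℝ)) :
            EuclideanSpace ℝ (Fin (k + m))) (Fin.castAdd m p)))
      ≤ ∑ p : Fin k, ∑ q : Fin k, |M l p q| * (‖w p‖ * ‖w q‖) := by
    refine Finset.sum_le_sum fun p _ => Finset.sum_le_sum fun q _ => ?_
    calc M l p q * _ ≤ |M l p q * _| := le_abs_self _
      _ = |M l p q| * |_| := abs_mul _ _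
      _ ≤ |M l p q| * (‖w p‖ * ‖w q‖) :=
          mul_le_mul_of_nonneg_left (hkey p q) (abs_nonneg _)
  have step2 : ∑ p : Fin k, ∑ q : Fin k, |M l p q| * (‖w p‖ * ‖w q‖)
      ≤ Real.sqrt (∑ i, ∑ j, (M l i j) ^ 2) * (∑ p, ‖w p‖ ^ 2) := by
    rw [← Finset.sum_product']
    calc (∑ pq ∈ Finset.univ ×ˢ Finset.univ, |M l pq.1 pq.2| * (‖w pq.1‖ * ‖w pq.2‖))
        ≤ Real.sqrt (∑ pq ∈ Finset.univ ×ˢ Finset.univ, |M l pq.1 pq.2| ^ 2)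
          * Real.sqrt (∑ pq ∈ Finset.univ ×ˢ Finset.univ, (‖w pq.1‖ * ‖w pq.2‖) ^ 2) :=
          Real.sum_mul_le_sqrt_mul_sqrt _ _ _
      _ = Real.sqrt (∑ i, ∑ j, (M l i j) ^ 2) * (∑ p, ‖w p‖ ^ 2) := by
          congr 1
          · rw [Finset.sum_product]
            simp [sq_abs]
          · rw [show (∑ pq ∈ Finset.univ ×ˢ Finset.univ, (‖w pq.1‖ * ‖w pq.2‖) ^ 2)
                = (∑ p, ‖w p‖ ^ 2) * (∑ q, ‖w q‖ ^ 2) by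
              rw [Finset.sum_mul_sum, Finset.sum_product]
              simp [mul_pow]]
            rw [show (∑ p, ‖w p‖ ^ 2) * (∑ q, ‖w q‖ ^ 2) = (∑ p, ‖w p‖ ^ 2) ^ 2 by ring]
            exact Real.sqrt_sq (by positivity)
  have hsum_w : (∑ p, ‖w p‖ ^ 2) = ∑ l', ∑ j, (Df x t l' j) ^ 2 := by
    rw [show (∑ p, ‖w p‖ ^ 2) = ∑ p, ∑ l', (Df x t l' p) ^ 2 from
      Finset.sum_congr rfl fun p _ => hwnorm p, Finset.sum_comm]
  calc (∑ p : Fin k, ∑ q : Fin k, M l p q *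
        ((if p = q then (1:ℝ) else 0) -
          ((P (EuclideanSpace.single (Fin.castAdd m q) (1:ℝ)) :
            EuclideanSpace ℝ (Fin (k + m))) (Fin.castAdd m p))))
      ≤ Real.sqrt (∑ i, ∑ j, (M l i j) ^ 2) * (∑ p, ‖w p‖ ^ 2) := step1.trans step2
    _ = 1 * (∑ l', ∑ j, (Df x t l' j) ^ 2) * Real.sqrt (∑ i, ∑ j, (M l i j) ^ 2) := by
        rw [hsum_w]; ring
end
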